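/- arXiv:1410.6266 — 3 statements merged into one kernel-verified Lean document; each statement's English description precedes it below -/
import Mathlib

section
/- For all complex numbers z, the product of the two entire power series f(z) = ∑_{m≥0} (-1)^m (z/2)^{2m}/(m! Γ(μ+m+1)) and g(z) = ∑_{k≥0} (z/2)^{2k}/(k! Γ(ν+k+1)) equals ∑_{n≥0} (-1)^n (z/2)^{2n} · ₂F₁(-n, -μ-n; ν+1; -1) / (n! Γ(μ+n+1) Γ(ν+1)), provided μ, ν > -1. -/
open Complex Finset

/-- Pochhammer symbol `(a)_m` for a complex number `a`. -/
noncomputable def poch (a : ℂ) (m : ℕ) : ℂ := ∏ j ∈ Finset.range m, (a + j)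

/-- Terminating Gaussian hypergeometric sum `₂F₁(-n, b; c; x)`. -/
noncomputable def hyp2F1neg (n : ℕ) (b c x : ℂ) : ℂ :=
  ∑ m ∈ Finset.range (n + 1), poch (-(n : ℂ)) m * poch b m / (poch c m * m.factorial) * x ^ m

lemma poch_zero (a : ℂ) : poch a 0 = 1 := by simp [poch]

lemma poch_succ (a : ℂ) (k : ℕ) : poch a (k + 1) = poch a k * (a + k) := by
  simp [poch, Finset.prod_range_succ]

lemma re_pos_ne_zero {x : ℂ} (hx : 0 < x.re) : x ≠ 0 := by
  intro h; rw [h] at hx; simp at hx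

lemma poch_ne_zero {x : ℂ} (hx : 0 < x.re) (k : ℕ) : poch x k ≠ 0 := by
  refine Finset.prod_ne_zero_iff.2 fun j _ => ?_
  apply re_pos_ne_zero
  simp only [Complex.add_re, Complex.natCast_re]
  positivity

lemma gamma_shift {x : ℂ} (hx : 0 < x.re) (k : ℕ) :
    Complex.Gamma (x + k) = poch x k * Complex.Gamma x := by
  induction k with
  | zero => simp [poch_zero]
  | succ k ih =>
      have hne : x + k ≠ 0 := by
        apply re_pos_ne_zero
        simp only [Complex.add_re, Complex.natCast_re]; positivity
      have h : x + ((k + 1 : ℕ) : ℂ) = (x + k) + 1 := by push_cast; ring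
      rw [h, Complex.Gamma_add_one _ hne, ih, poch_succ]; ring

lemma poch_neg_nat (k : ℕ) : ∀ m : ℕ,
    poch (-((m + k : ℕ) : ℂ)) k * (m.factorial : ℂ) = (-1) ^ k * ((m + k).factorial : ℂ) := by
  induction k with
  | zero => intro m; simp [poch_zero]
  | succ k ih =>
      intro m
      have hn : m + (k + 1) = m + 1 + k := by omega
      rw [hn, poch_succ]
      have hcast : (-(((m + 1 + k : ℕ)) : ℂ)) + (k : ℂ) = -((m : ℂ) + 1) := by push_cast; ring
      rw [hcast]
      have ih' := ih (m + 1)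
      have h2 : (((m + 1).factorial : ℕ) : ℂ) = ((m : ℂ) + 1) * (m.factorial : ℂ) := by
        rw [Nat.factorial_succ]; push_cast; ring
      rw [h2] at ih'
      linear_combination -ih'

lemma poch_neg (a : ℂ) (k : ℕ) : poch (-a) k = (-1) ^ k * poch (a - k + 1) k := by
  rcases Nat.eq_zero_or_pos k with rfl | hk
  · simp [poch_zero]
  · unfold poch
    have h1 : ∀ j ∈ Finset.range k, (-a + (j : ℂ)) = (-1) * (a - j) := fun j _ => by ring
    rw [Finset.prod_congr rfl h1, Finset.prod_mul_distrib, Finset.prod_const, Finset.card_range]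
    congr 1
    rw [← Finset.prod_range_reflect (fun j => a - (k : ℂ) + 1 + j) k]
    refine Finset.prod_congr rfl fun j hj => ?_
    have hj' : j < k := Finset.mem_range.1 hj
    have : ((k - 1 - j : ℕ) : ℂ) = (k : ℂ) - 1 - j := by
      have h1j : j ≤ k - 1 := by omega
      push_cast [Nat.cast_sub h1j, Nat.cast_sub (by omega : 1 ≤ k)]
      ring
    rw [this]; ring

lemma summable_aux (μ : ℝ) (hμ : -1 < μ) (z c : ℂ) (hc : ‖c‖ ≤ 1) :
    Summable (fun m : ℕ =>
      ‖c ^ m * (z / 2) ^ (2 * m) / ((m.factorial : ℂ) * Complex.Gamma ((μ : ℂ) + m + 1))‖) := by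
  have hG2 : 0 < Real.Gamma (μ + 2) := Real.Gamma_pos_of_pos (by linarith)
  have mono : ∀ m : ℕ, 1 ≤ m → Real.Gamma (μ + 2) ≤ Real.Gamma (μ + m + 1) := by
    intro m hm
    induction m with
    | zero => omega
    | succ m ih =>
        rcases Nat.eq_zero_or_pos m with rfl | hm'
        · have h0 : μ + ((0 + 1 : ℕ) : ℝ) + 1 = μ + 2 := by push_cast; ring
          rw [h0]
        · have ih' := ih hm'
          have harg : μ + (m + 1 : ℕ) + 1 = (μ + m + 1) + 1 := by push_cast; ring
          have hpos : (0:ℝ) < μ + m + 1 := by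
            have : (1:ℝ) ≤ m := by exact_mod_cast hm'
            linarith
          rw [harg, Real.Gamma_add_one (ne_of_gt hpos)]
          have hGpos : 0 < Real.Gamma (μ + m + 1) := Real.Gamma_pos_of_pos hpos
          have h1 : (1:ℝ) ≤ μ + m + 1 := by
            have : (1:ℝ) ≤ m := by exact_mod_cast hm'
            linarith
          nlinarith
  apply Summable.of_norm_bounded_eventually_nat
      (g := fun m => (1 / Real.Gamma (μ + 2)) * (‖(z / 2) ^ 2‖ ^ m / m.factorial))
  · exact (Real.summable_pow_div_factorial _).mul_left _
  · filter_upwards [Filter.eventually_ge_atTop 1] with m hm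
    have hGpos : 0 < Real.Gamma (μ + m + 1) := by
      apply Real.Gamma_pos_of_pos
      have : (0:ℝ) ≤ m := Nat.cast_nonneg m
      linarith
    have hGam : Complex.Gamma ((μ : ℂ) + m + 1) = ((Real.Gamma (μ + m + 1) : ℝ) : ℂ) := by
      rw [← Complex.Gamma_ofReal]; push_cast; ring_nf
    rw [norm_norm]
    have hnorm : ‖c ^ m * (z / 2) ^ (2 * m) / ((m.factorial : ℂ) * Complex.Gamma ((μ : ℂ) + m + 1))‖
        = ‖c‖ ^ m * ‖z / 2‖ ^ (2 * m) / ((m.factorial : ℝ) * Real.Gamma (μ + m + 1)) := by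
      rw [hGam]
      simp [norm_div, norm_mul, norm_pow, Real.norm_of_nonneg hGpos.le]
    rw [hnorm]
    have hle1 : ‖c‖ ^ m ≤ 1 := pow_le_one₀ (norm_nonneg _) hc
    have hfac : (0:ℝ) < (m.factorial : ℝ) := by positivity
    have hzz : ‖(z / 2) ^ 2‖ ^ m = ‖z / 2‖ ^ (2 * m) := by
      rw [norm_pow, ← pow_mul]
    rw [hzz]
    calc ‖c‖ ^ m * ‖z / 2‖ ^ (2 * m) / ((m.factorial : ℝ) * Real.Gamma (μ + m + 1))
        ≤ 1 * ‖z / 2‖ ^ (2 * m) / ((m.factorial : ℝ) * Real.Gamma (μ + 2)) := by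
          apply div_le_div₀ (by positivity)
          · apply mul_le_mul hle1 le_rfl (by positivity) zero_le_one
          · positivity
          · apply mul_le_mul le_rfl (mono m hm) hG2.le hfac.le
      _ = 1 / Real.Gamma (μ + 2) * (‖z / 2‖ ^ (2 * m) / (m.factorial : ℝ)) := by ring

set_option maxHeartbeats 2000000 in
theorem stmt0 (μ ν : ℝ) (hμ : -1 < μ) (hν : -1 < ν) (z : ℂ) :
    (∑' m : ℕ, (-1) ^ m * (z / 2) ^ (2 * m) / (m.factorial * Complex.Gamma ((μ : ℂ) + m + 1))) *
      (∑' k : ℕ, (z / 2) ^ (2 * k) / (k.factorial * Complex.Gamma ((ν : ℂ) + k + 1))) =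
    ∑' n : ℕ, (-1) ^ n * (z / 2) ^ (2 * n) *
        hyp2F1neg n (-(μ : ℂ) - n) ((ν : ℂ) + 1) (-1) /
      (n.factorial * Complex.Gamma ((μ : ℂ) + n + 1) * Complex.Gamma ((ν : ℂ) + 1)) := by
  have hf : Summable (fun m : ℕ =>
      ‖(-1 : ℂ) ^ m * (z / 2) ^ (2 * m) / ((m.factorial : ℂ) * Complex.Gamma ((μ : ℂ) + m + 1))‖) :=
    summable_aux μ hμ z (-1) (by norm_num)
  have hg : Summable (fun k : ℕ =>
      ‖(z / 2) ^ (2 * k) / ((k.factorial : ℂ) * Complex.Gamma ((ν : ℂ) + k + 1))‖) := by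
    have := summable_aux ν hν z 1 (by norm_num)
    simpa using this
  rw [tsum_mul_tsum_eq_tsum_sum_antidiagonal_of_summable_norm hf hg]
  refine tsum_congr fun n => ?_
  rw [Finset.Nat.sum_antidiagonal_eq_sum_range_succ_mk]
  have hrhs : (-1 : ℂ) ^ n * (z / 2) ^ (2 * n) *
        hyp2F1neg n (-(μ : ℂ) - n) ((ν : ℂ) + 1) (-1) /
      (n.factorial * Complex.Gamma ((μ : ℂ) + n + 1) * Complex.Gamma ((ν : ℂ) + 1))
      = ∑ j ∈ Finset.range (n + 1),
        (-1 : ℂ) ^ n * (z / 2) ^ (2 * n) *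
          (poch (-(n : ℂ)) j * poch (-(μ : ℂ) - n) j / (poch ((ν : ℂ) + 1) j * j.factorial)
            * (-1) ^ j) /
        (n.factorial * Complex.Gamma ((μ : ℂ) + n + 1) * Complex.Gamma ((ν : ℂ) + 1)) := by
    rw [hyp2F1neg, Finset.mul_sum, Finset.sum_div]
  rw [hrhs]
  conv_rhs => rw [← Finset.sum_range_reflect]
  refine Finset.sum_congr rfl fun m hm => ?_
  have hm' : m ≤ n := by simpa [Nat.lt_succ_iff] using hm
  obtain ⟨k, rfl⟩ : ∃ k, n = m + k := ⟨n - m, by omega⟩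
  simp only [show m + k + 1 - 1 - m = k from by omega, show m + k - m = k from by omega]
  -- nonzeroness facts
  have hreμ : (0:ℝ) < ((μ : ℂ) + m + 1).re := by
    simp only [Complex.add_re, Complex.ofReal_re, Complex.natCast_re, Complex.one_re]
    linarith [Nat.cast_nonneg (α := ℝ) m]
  have hreν : (0:ℝ) < ((ν : ℂ) + 1).re := by
    simp only [Complex.add_re, Complex.ofReal_re, Complex.one_re]
    linarith
  have hGμ : Complex.Gamma ((μ : ℂ) + m + 1) ≠ 0 := Complex.Gamma_ne_zero_of_re_pos hreμ
  have hGν : Complex.Gamma ((ν : ℂ) + 1) ≠ 0 := Complex.Gamma_ne_zero_of_re_pos hreν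
  have hPμ : poch ((μ : ℂ) + m + 1) k ≠ 0 := poch_ne_zero hreμ k
  have hPν : poch ((ν : ℂ) + 1) k ≠ 0 := poch_ne_zero hreν k
  have hfm : ((m.factorial : ℂ)) ≠ 0 := by exact_mod_cast m.factorial_ne_zero
  have hfk : ((k.factorial : ℂ)) ≠ 0 := by exact_mod_cast k.factorial_ne_zero
  have hfmk : (((m + k).factorial : ℂ)) ≠ 0 := by exact_mod_cast (m + k).factorial_ne_zero
  -- rewrite pochhammers and Gammas
  have h1 : poch (-((m + k : ℕ) : ℂ)) k = (-1) ^ k * ((m + k).factorial : ℂ) / (m.factorial : ℂ) := by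
    rw [eq_div_iff hfm]
    exact poch_neg_nat k m
  have h2 : poch (-(μ : ℂ) - ((m + k : ℕ) : ℂ)) k = (-1) ^ k * poch ((μ : ℂ) + m + 1) k := by
    have ha : -(μ : ℂ) - ((m + k : ℕ) : ℂ) = -((μ : ℂ) + ((m + k : ℕ) : ℂ)) := by ring
    rw [ha, poch_neg]
    congr 2
    push_cast; ring
  have h3 : Complex.Gamma ((μ : ℂ) + ((m + k : ℕ) : ℂ) + 1)
      = poch ((μ : ℂ) + m + 1) k * Complex.Gamma ((μ : ℂ) + m + 1) := by
    have harg : (μ : ℂ) + ((m + k : ℕ) : ℂ) + 1 = ((μ : ℂ) + m + 1) + k := by push_cast; ring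
    rw [harg, gamma_shift hreμ]
  have h4 : Complex.Gamma ((ν : ℂ) + (k : ℂ) + 1)
      = poch ((ν : ℂ) + 1) k * Complex.Gamma ((ν : ℂ) + 1) := by
    have harg : (ν : ℂ) + (k : ℂ) + 1 = ((ν : ℂ) + 1) + k := by push_cast; ring
    rw [harg, gamma_shift hreν]
  rw [h1, h2, h3, h4]
  field_simp
  ring_nf
  have e4 : ((-1:ℂ)) ^ (k * 4) = 1 := by
    have h24 : k * 4 = 2 * (2 * k) := by ring
    rw [h24, pow_mul]; norm_num
  rw [e4]
  have hPm2 : poch (1 + (μ:ℂ) + m) k ≠ 0 := by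
    have h' : (1 + (μ:ℂ) + (m:ℂ)) = (μ:ℂ) + m + 1 := by ring
    rw [h']; exact hPμ
  have eF : (((m + k).factorial : ℂ)) * (((m + k).factorial : ℂ))⁻¹ = 1 := mul_inv_cancel₀ hfmk
  have eP : poch (1 + (μ:ℂ) + m) k * (poch (1 + (μ:ℂ) + m) k)⁻¹ = 1 := mul_inv_cancel₀ hPm2
  linear_combination
end

section
/- Let (z_n) be a sequence of complex numbers, all with the same argument, with |z_n| > 1, such that ∑ 1/|z_n| converges and f(z) = z ∏_{n≥1}(1 - z/z_n) defines an entire function. If ∑_{n≥1} 1/(|z_n| - 1) ≤ 1, then f is starlike (univalent with f(D) a starlike domain with respect to 0) on the open unit disk D. -/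
open Complex Metric


-- Lemma E
lemma expE {w : ℂ} (hw : w.re ≤ 0) : ‖Complex.exp w - 1‖ ≤ ‖w‖ := by
  have hder : ∀ t ∈ Set.uIcc (0:ℝ) 1,
      HasDerivAt (fun t : ℝ => Complex.exp (t * w)) (Complex.exp (t * w) * w) t := by
    intro t _
    have h1 : HasDerivAt (fun t : ℝ => (t : ℂ) * w) w t := by
      simpa using (hasDerivAt_id (t : ℂ)).mul_const w |>.comp_ofReal
    simpa using h1.cexp
  have hcont : Continuous (fun t : ℝ => Complex.exp (t * w) * w) := by
    fun_prop
  have hint := intervalIntegral.integral_eq_sub_of_hasDerivAt hder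
      (hcont.intervalIntegrable 0 1)
  simp only [Complex.ofReal_one, Complex.ofReal_zero, one_mul, zero_mul, Complex.exp_zero] at hint
  rw [← hint]
  have := intervalIntegral.norm_integral_le_of_norm_le_const (C := ‖w‖)
      (f := fun t : ℝ => Complex.exp (t * w) * w) (a := 0) (b := 1) ?_
  · simpa using this
  · intro t ht
    rw [Set.uIoc_of_le (by norm_num)] at ht
    rw [norm_mul, Complex.norm_exp]
    have : ((t : ℂ) * w).re = t * w.re := by simp
    rw [this]
    have h1 : Real.exp (t * w.re) ≤ 1 := by
      rw [Real.exp_le_one_iff]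
      exact mul_nonpos_of_nonneg_of_nonpos (le_of_lt ht.1) hw
    nlinarith [norm_nonneg w]


lemma termD {ζ a b : ℂ} (hζ : 2 ≤ ‖ζ‖) (ha : ‖a‖ ≤ 1) (hb : ‖b‖ ≤ 1) :
    ‖Complex.log (1 - a/ζ) - Complex.log (1 - b/ζ)‖ ≤ ‖a - b‖ / (‖ζ‖ - 1) := by
  have hζ0 : ζ ≠ 0 := by
    intro h; rw [h] at hζ; simp at hζ; linarith
  have hζpos : (0:ℝ) < ‖ζ‖ := by positivity
  have hζ1 : (0:ℝ) < ‖ζ‖ - 1 := by linarith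
  have hseg : ∀ t : ℝ, t ∈ Set.uIcc (0:ℝ) 1 → ‖b + (t:ℂ) * (a - b)‖ ≤ 1 := by
    intro t ht
    rw [Set.uIcc_of_le (by norm_num)] at ht
    have h0 : b + (t:ℂ) * (a - b) = ((1 - t : ℝ):ℂ) * b + ((t:ℝ):ℂ) * a := by push_cast; ring
    rw [h0]
    calc ‖((1 - t : ℝ):ℂ) * b + ((t:ℝ):ℂ) * a‖ ≤ ‖((1 - t : ℝ):ℂ) * b‖ + ‖((t:ℝ):ℂ) * a‖ :=
          norm_add_le _ _
      _ = |1 - t| * ‖b‖ + |t| * ‖a‖ := by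
          rw [norm_mul, norm_mul, Complex.norm_real, Complex.norm_real, Real.norm_eq_abs,
            Real.norm_eq_abs]
      _ ≤ |1 - t| * 1 + |t| * 1 := by gcongr
      _ = 1 := by
          rw [_root_.abs_of_nonneg ht.1, _root_.abs_of_nonneg (by linarith [ht.2] : (0:ℝ) ≤ 1 - t)]
          ring
  have hlow : ∀ x : ℂ, ‖x‖ ≤ 1 → (‖ζ‖ - 1)/‖ζ‖ ≤ ‖1 - x/ζ‖ := by
    intro x hx
    have h1 : ‖x/ζ‖ ≤ 1/‖ζ‖ := by
      rw [norm_div]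
      gcongr
    calc (‖ζ‖ - 1)/‖ζ‖ = 1 - 1/‖ζ‖ := by field_simp
      _ ≤ 1 - ‖x/ζ‖ := by linarith
      _ = ‖(1:ℂ)‖ - ‖x/ζ‖ := by simp
      _ ≤ ‖1 - x/ζ‖ := norm_sub_norm_le _ _
  have hne : ∀ x : ℂ, ‖x‖ ≤ 1 → (1 - x/ζ) ≠ 0 := by
    intro x hx h
    have h2 := hlow x hx
    rw [h] at h2; simp at h2
    have hp : 0 < (‖ζ‖ - 1)/‖ζ‖ := div_pos hζ1 hζpos
    linarith
  have hslit : ∀ x : ℂ, ‖x‖ ≤ 1 → (1 - x/ζ) ∈ Complex.slitPlane := by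
    intro x hx
    rw [Complex.mem_slitPlane_iff]
    left
    have h1 : ‖x/ζ‖ ≤ 1/‖ζ‖ := by
      rw [norm_div]; gcongr
    have h2 : |(x/ζ).re| ≤ ‖x/ζ‖ := Complex.abs_re_le_norm _
    have h4 : (1 - x/ζ).re = 1 - (x/ζ).re := by simp
    rw [h4]
    have h3 : 1/‖ζ‖ ≤ 1/2 := by
      apply div_le_div_of_nonneg_left <;> linarith
    cases abs_le.mp h2 with
    | intro hl hr => linarith
  set γ : ℝ → ℂ := fun t => b + (t:ℂ) * (a - b) with hγ
  have hder : ∀ t ∈ Set.uIcc (0:ℝ) 1,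
      HasDerivAt (fun t : ℝ => Complex.log (1 - γ t / ζ))
        ((1 - γ t/ζ)⁻¹ * ((b - a)/ζ)) t := by
    intro t ht
    have h1 : HasDerivAt γ (a - b) t := by
      have := ((hasDerivAt_id (t:ℂ)).mul_const (a - b)).comp_ofReal
      simpa [hγ] using this.const_add b
    have h2 : HasDerivAt (fun t : ℝ => 1 - γ t / ζ) ((b - a)/ζ) t := by
      have h3 := (h1.div_const ζ).const_sub 1
      have h4 : (b - a)/ζ = -((a-b)/ζ) := by ring
      rw [h4]
      simpa using h3
    exact (Complex.hasDerivAt_log (hslit _ (hseg t ht))).comp t h2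
  have hcont : ContinuousOn (fun t : ℝ => (1 - γ t/ζ)⁻¹ * ((b - a)/ζ)) (Set.uIcc (0:ℝ) 1) := by
    apply ContinuousOn.mul _ continuousOn_const
    apply ContinuousOn.inv₀
    · fun_prop
    · intro t ht
      exact hne _ (hseg t ht)
  have hint := intervalIntegral.integral_eq_sub_of_hasDerivAt hder hcont.intervalIntegrable
  have hγ1 : γ 1 = a := by simp [hγ]
  have hγ0 : γ 0 = b := by simp [hγ]
  rw [hγ1, hγ0] at hint
  rw [← hint]
  have hC : ((‖ζ‖ - 1)/‖ζ‖)⁻¹ * (‖a-b‖/‖ζ‖)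
      = ‖a - b‖ / (‖ζ‖ - 1) := by
    rw [inv_div]
    field_simp
  have hbound := intervalIntegral.norm_integral_le_of_norm_le_const
      (C := ((‖ζ‖ - 1)/‖ζ‖)⁻¹ * (‖a-b‖/‖ζ‖))
      (f := fun t : ℝ => (1 - γ t/ζ)⁻¹ * ((b - a)/ζ)) (a := 0) (b := 1) ?_
  · rw [hC] at hbound
    simpa using hbound
  · intro t ht
    rw [Set.uIoc_of_le (by norm_num)] at ht
    have hts : t ∈ Set.uIcc (0:ℝ) 1 := by
      rw [Set.uIcc_of_le (by norm_num)]
      exact ⟨le_of_lt ht.1, ht.2⟩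
    rw [norm_mul, norm_inv, norm_div]
    have hl := hlow _ (hseg t hts)
    have hpos : (0:ℝ) < (‖ζ‖ - 1)/‖ζ‖ := div_pos hζ1 hζpos
    rw [norm_sub_rev b a]
    gcongr



lemma div_norm_half {ζ w : ℂ} (hζ : 2 ≤ ‖ζ‖) (hw : ‖w‖ ≤ 1) : ‖w/ζ‖ ≤ 1/2 := by
  have hζpos : (0:ℝ) < ‖ζ‖ := by linarith
  rw [norm_div, div_le_div_iff₀ hζpos (by norm_num)]
  nlinarith

lemma one_sub_div_lb {ζ w : ℂ} (hζ : 2 ≤ ‖ζ‖) (hw : ‖w‖ ≤ 1) :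
    (1:ℝ)/2 ≤ ‖1 - w/ζ‖ := by
  have h1 := div_norm_half hζ hw
  calc (1:ℝ)/2 = 1 - 1/2 := by norm_num
    _ ≤ 1 - ‖w/ζ‖ := by linarith
    _ = ‖(1:ℂ)‖ - ‖w/ζ‖ := by simp
    _ ≤ ‖1 - w/ζ‖ := norm_sub_norm_le _ _

lemma one_sub_div_ne {ζ w : ℂ} (hζ : 2 ≤ ‖ζ‖) (hw : ‖w‖ ≤ 1) :
    (1 - w/ζ) ≠ 0 := by
  intro h
  have := one_sub_div_lb hζ hw
  rw [h] at this; norm_num at this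

lemma one_sub_div_slit {ζ w : ℂ} (hζ : 2 ≤ ‖ζ‖) (hw : ‖w‖ ≤ 1) :
    (1 - w/ζ) ∈ Complex.slitPlane := by
  rw [Complex.mem_slitPlane_iff]
  left
  have h1 := div_norm_half hζ hw
  have h2 : |(w/ζ).re| ≤ ‖w/ζ‖ := Complex.abs_re_le_norm _
  have h4 : (1 - w/ζ).re = 1 - (w/ζ).re := by simp
  rw [h4]
  cases abs_le.mp h2 with
  | intro hl hr => linarith

noncomputable def MM (z : ℕ → ℂ) (w : ℂ) : ℂ := ∑' n, Complex.log (1 - w / z n)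
noncomputable def gg (z : ℕ → ℂ) (w : ℂ) : ℂ := w * Complex.exp (MM z w)

lemma gg_zero {z : ℕ → ℂ} : gg z 0 = 0 := by simp [gg]

section
variable {z : ℕ → ℂ}


lemma termD0 (h2 : ∀ n, 2 ≤ ‖z n‖) {w : ℂ} (hw : ‖w‖ ≤ 1) (n : ℕ) :
    ‖Complex.log (1 - w / z n)‖ ≤ ‖w‖ * (1/(‖z n‖ - 1)) := by
  have := termD (a := w) (b := 0) (h2 n) hw (by simp)
  simpa [mul_one_div, div_eq_mul_inv] using this

lemma sumD (h2 : ∀ n, 2 ≤ ‖z n‖)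
    (hS : Summable fun n => 1/(‖z n‖ - 1)) {w : ℂ} (hw : ‖w‖ ≤ 1) :
    Summable fun n => Complex.log (1 - w / z n) := by
  apply Summable.of_norm_bounded (g := fun n => ‖w‖ * (1/(‖z n‖ - 1)))
    (hS.mul_left ‖w‖)
  exact termD0 h2 hw

lemma LipM (h2 : ∀ n, 2 ≤ ‖z n‖)
    (hS : Summable fun n => 1/(‖z n‖ - 1))
    (hS1 : ∑' n, 1/(‖z n‖ - 1) ≤ 1)
    {a b : ℂ} (ha : ‖a‖ ≤ 1) (hb : ‖b‖ ≤ 1) :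
    ‖MM z a - MM z b‖ ≤ ‖a - b‖ := by
  have hsa := sumD h2 hS ha
  have hsb := sumD h2 hS hb
  have hdiff : MM z a - MM z b = ∑' n, (Complex.log (1 - a / z n) - Complex.log (1 - b / z n)) := by
    rw [MM, MM, ← hsa.tsum_sub hsb]
  rw [hdiff]
  have hnsum : Summable fun n => ‖Complex.log (1 - a / z n) - Complex.log (1 - b / z n)‖ := by
    apply Summable.of_nonneg_of_le (fun n => norm_nonneg _)
      (fun n => termD (h2 n) ha hb)
    simpa [div_eq_mul_inv, mul_one_div] using hS.mul_left ‖a - b‖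
  calc ‖∑' n, (Complex.log (1 - a / z n) - Complex.log (1 - b / z n))‖
      ≤ ∑' n, ‖Complex.log (1 - a / z n) - Complex.log (1 - b / z n)‖ :=
        norm_tsum_le_tsum_norm hnsum
    _ ≤ ∑' n, ‖a - b‖ * (1/(‖z n‖ - 1)) := by
        apply Summable.tsum_le_tsum _ hnsum (hS.mul_left ‖a - b‖)
        intro n
        simpa [div_eq_mul_inv, mul_one_div] using termD (h2 n) ha hb
    _ = ‖a - b‖ * ∑' n, 1/(‖z n‖ - 1) := tsum_mul_left
    _ ≤ ‖a - b‖ * 1 := by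
        apply mul_le_mul_of_nonneg_left hS1 (norm_nonneg _)
    _ = ‖a - b‖ := mul_one _

lemma prodF (h2 : ∀ n, 2 ≤ ‖z n‖)
    (hS : Summable fun n => 1/(‖z n‖ - 1)) {w : ℂ} (hw : ‖w‖ ≤ 1) :
    (∏' n, (1 - w / z n)) = Complex.exp (MM z w) := by
  have key := Complex.cexp_tsum_eq_tprod
    (f := fun n => 1 - w / z n)
    (fun n => one_sub_div_ne (h2 n) hw)
    (sumD h2 hS hw)
  have := key
  simpa [MM] using this.symm

lemma Mdiff (h2 : ∀ n, 2 ≤ ‖z n‖)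
    (hS : Summable fun n => 1/(‖z n‖ - 1)) :
    DifferentiableOn ℂ (MM z) (ball (0:ℂ) 1) := by
  apply differentiableOn_tsum_of_summable_norm hS
    (F := fun n w => Complex.log (1 - w / z n)) _ isOpen_ball
  · intro n w hw
    rw [mem_ball_zero_iff] at hw
    calc ‖Complex.log (1 - w / z n)‖ ≤ ‖w‖ * (1/(‖z n‖ - 1)) :=
          termD0 h2 hw.le n
      _ ≤ 1 * (1/(‖z n‖ - 1)) := by
          apply mul_le_mul_of_nonneg_right hw.le
          have h3 : (0:ℝ) < ‖z n‖ - 1 := by linarith [h2 n]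
          positivity
      _ = 1/(‖z n‖ - 1) := one_mul _
  · intro n
    intro w hw
    rw [mem_ball_zero_iff] at hw
    apply DifferentiableAt.differentiableWithinAt
    have hd : DifferentiableAt ℂ (fun w : ℂ => 1 - w / z n) w :=
      (differentiableAt_const 1).sub (differentiableAt_id.div_const (z n))
    exact (Complex.differentiableAt_log (one_sub_div_slit (h2 n) hw.le)).comp w hd

lemma gdiff (h2 : ∀ n, 2 ≤ ‖z n‖)
    (hS : Summable fun n => 1/(‖z n‖ - 1)) :
    DifferentiableOn ℂ (gg z) (ball (0:ℂ) 1) :=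
  differentiableOn_id.mul (Mdiff h2 hS).cexp

lemma gg_ne_zero {w : ℂ} (hw : w ≠ 0) : gg z w ≠ 0 :=
  mul_ne_zero hw (Complex.exp_ne_zero _)

lemma inj_aux (h2 : ∀ n, 2 ≤ ‖z n‖)
    (hS : Summable fun n => 1/(‖z n‖ - 1))
    (hS1 : ∑' n, 1/(‖z n‖ - 1) ≤ 1)
    {a b : ℂ} (ha : ‖a‖ < 1) (hb : ‖b‖ < 1) (heq : gg z a = gg z b)
    (hre : (MM z b).re ≤ (MM z a).re) : a = b := by
  have hea : Complex.exp (MM z a) ≠ 0 := Complex.exp_ne_zero _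
  have hab : a = b * Complex.exp (MM z b - MM z a) := by
    rw [Complex.exp_sub, mul_div_assoc', eq_div_iff hea]
    simpa [gg] using heq
  have hD : (MM z b - MM z a).re ≤ 0 := by
    rw [Complex.sub_re]; linarith
  have h1 : a - b = b * (Complex.exp (MM z b - MM z a) - 1) := by linear_combination hab
  have h2' : ‖a - b‖ ≤ ‖b‖ * ‖a - b‖ := by
    calc ‖a - b‖ = ‖b‖ * ‖Complex.exp (MM z b - MM z a) - 1‖ := by rw [h1, norm_mul]
      _ ≤ ‖b‖ * ‖MM z b - MM z a‖ := by
          apply mul_le_mul_of_nonneg_left (expE hD) (norm_nonneg _)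
      _ ≤ ‖b‖ * ‖b - a‖ := by
          apply mul_le_mul_of_nonneg_left (LipM h2 hS hS1 hb.le ha.le) (norm_nonneg _)
      _ = ‖b‖ * ‖a - b‖ := by rw [norm_sub_rev]
  have h3 : ‖a - b‖ ≤ 0 := by nlinarith [norm_nonneg (a - b)]
  have h4 : a - b = 0 := by
    have := norm_nonneg (a - b)
    have : ‖a - b‖ = 0 := le_antisymm h3 this
    exact norm_eq_zero.mp this
  exact sub_eq_zero.mp h4

lemma ggInj (h2 : ∀ n, 2 ≤ ‖z n‖)
    (hS : Summable fun n => 1/(‖z n‖ - 1))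
    (hS1 : ∑' n, 1/(‖z n‖ - 1) ≤ 1) :
    Set.InjOn (gg z) (ball (0:ℂ) 1) := by
  intro a ha b hb heq
  rw [mem_ball_zero_iff] at ha hb
  rcases le_total (MM z b).re (MM z a).re with h | h
  · exact inj_aux h2 hS hS1 ha hb heq h
  · exact (inj_aux h2 hS hS1 hb ha heq.symm h).symm

lemma polar (h2 : ∀ n, 2 ≤ ‖z n‖)
    (hS : Summable fun n => 1/(‖z n‖ - 1))
    (hS1 : ∑' n, 1/(‖z n‖ - 1) ≤ 1)
    {r : ℝ} (hr0 : 0 < r) (hr1 : r < 1) {v₁ v₂ : ℂ}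
    (hv1 : ‖v₁‖ = r) (hv2 : ‖v₂‖ = r) {lam : ℝ} (hlam : 0 < lam)
    (heq : gg z v₁ = (lam:ℂ) * gg z v₂) : v₁ = v₂ := by
  have hπ := Real.pi_pos
  have hv₂ : v₂ ≠ 0 := by
    intro h; rw [h] at hv2; simp at hv2; linarith
  set q : ℂ := v₁ / v₂ with hqdef
  have habsq : ‖q‖ = 1 := by
    rw [hqdef, norm_div, hv1, hv2]
    field_simp
  have hq : v₁ = v₂ * q := by
    rw [hqdef]; field_simp
  set D : ℂ := MM z v₂ - MM z v₁ with hDdef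
  have he2 : Complex.exp (MM z v₁) ≠ 0 := Complex.exp_ne_zero _
  have hqe : q = (lam:ℂ) * Complex.exp D := by
    have heq' : v₁ * Complex.exp (MM z v₁) = (lam:ℂ) * (v₂ * Complex.exp (MM z v₂)) := by
      simpa [gg] using heq
    rw [hqdef, hDdef, Complex.exp_sub]
    field_simp
    linear_combination heq'
  set ψ : ℝ := Complex.arg q with hψdef
  have hψq : Complex.exp (ψ * Complex.I) = q := by
    have h5 := Complex.norm_mul_exp_arg_mul_I q
    rw [habsq] at h5
    simpa using h5
  have hexp : Complex.exp ((ψ:ℂ) * Complex.I) = Complex.exp (↑(Real.log lam) + D) := by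
    rw [Complex.exp_add, ← Complex.ofReal_exp, Real.exp_log hlam, hψq, hqe]
  obtain ⟨k, hk⟩ := Complex.exp_eq_exp_iff_exists_int.mp hexp
  have him : ψ = D.im + k * (2 * Real.pi) := by
    have h6 := congrArg Complex.im hk
    simpa using h6
  have hψπ : |ψ| ≤ Real.pi := Complex.abs_arg_le_pi q
  have hDnorm : ‖D‖ ≤ ‖v₂ - v₁‖ :=
    LipM h2 hS hS1 (by rw [hv2]; linarith) (by rw [hv1]; linarith)
  have hchord : ‖v₂ - v₁‖ ≤ r * |ψ| := by
    have h7 : v₂ - v₁ = -(v₂ * (q - 1)) := by rw [hq]; ring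
    rw [h7, norm_neg, norm_mul, hv2]
    apply mul_le_mul_of_nonneg_left _ hr0.le
    calc ‖q - 1‖ = ‖Complex.exp ((ψ:ℂ) * Complex.I) - 1‖ := by rw [hψq]
      _ ≤ ‖(ψ:ℂ) * Complex.I‖ := expE (by simp)
      _ = |ψ| := by simp
  have hDim : |D.im| ≤ r * |ψ| := by
    calc |D.im| ≤ ‖D‖ := Complex.abs_im_le_norm D
      _ = ‖D‖ := rfl
      _ ≤ ‖v₂ - v₁‖ := hDnorm
      _ ≤ r * |ψ| := hchord
  have hk0 : k = 0 := by
    have h8 : |(k:ℝ)| * (2 * Real.pi) = |ψ - D.im| := by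
      have h8a : ψ - D.im = (k:ℝ) * (2 * Real.pi) := by linarith [him]
      rw [h8a, abs_mul, abs_of_pos (by linarith : (0:ℝ) < 2 * Real.pi)]
    have h9 : |ψ - D.im| < 2 * Real.pi := by
      have := abs_sub (ψ) (D.im)
      have h10 : |ψ - D.im| ≤ |ψ| + |D.im| := abs_sub _ _
      have h11 : r * |ψ| ≤ r * Real.pi := by
        apply mul_le_mul_of_nonneg_left hψπ hr0.le
      nlinarith
    have h12 : |(k:ℝ)| < 1 := by nlinarith
    have h14 : |k| < 1 := by exact_mod_cast h12
    rcases abs_lt.mp h14 with ⟨hl, hr⟩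
    omega
  have hψ0 : ψ = 0 := by
    rw [hk0] at him
    simp at him
    rw [← him] at hDim
    have h15 : |ψ| ≤ 0 := by nlinarith
    have h16 : |ψ| = 0 := le_antisymm h15 (abs_nonneg _)
    exact abs_eq_zero.mp h16
  have hq1 : q = 1 := by rw [← hψq, hψ0]; simp
  rw [hq, hq1, mul_one]

lemma ggOpen (h2 : ∀ n, 2 ≤ ‖z n‖)
    (hS : Summable fun n => 1/(‖z n‖ - 1))
    {s : Set ℂ} (hs : s ⊆ ball (0:ℂ) 1) (hso : IsOpen s) : IsOpen (gg z '' s) := by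
  have hd : AnalyticOnNhd ℂ (gg z) (ball (0:ℂ) 1) :=
    (gdiff h2 hS).analyticOnNhd isOpen_ball
  rcases hd.is_constant_or_isOpen (convex_ball (0:ℂ) 1).isPreconnected with ⟨w, hw⟩ | hopen
  · exfalso
    have h0 := hw 0 (by simp)
    have hhalf := hw (1/2 : ℂ) (by rw [mem_ball_zero_iff]; norm_num)
    rw [gg_zero] at h0
    have : gg z (1/2 : ℂ) ≠ 0 := gg_ne_zero (by norm_num)
    rw [hhalf, ← h0] at this
    exact this rfl
  · exact hopen s hs hso

lemma noExt (h2 : ∀ n, 2 ≤ ‖z n‖)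
    (hS : Summable fun n => 1/(‖z n‖ - 1))
    (hS1 : ∑' n, 1/(‖z n‖ - 1) ≤ 1)
    {r : ℝ} (hr0 : 0 < r) (hr1 : r < 1) {v : ℂ} (hv : ‖v‖ = r)
    {lam : ℝ} (hlam : 1 < lam) :
    (lam:ℂ) * gg z v ∉ gg z '' closedBall (0:ℂ) r := by
  intro hmem
  set K := gg z '' closedBall (0:ℂ) r with hK
  have hKc : IsCompact K := (isCompact_closedBall (0:ℂ) r).image_of_continuousOn
    ((gdiff h2 hS).continuousOn.mono (closedBall_subset_ball hr1))
  have hv0 : v ≠ 0 := by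
    intro h; rw [h] at hv; simp at hv; linarith
  have hgv : gg z v ≠ 0 := gg_ne_zero hv0
  set S := {μ : ℝ | 1 ≤ μ ∧ (μ:ℂ) * gg z v ∈ K} with hSdef
  have hvK : gg z v ∈ K := ⟨v, by rw [mem_closedBall_zero_iff, hv], rfl⟩
  have hSne : S.Nonempty := ⟨1, le_refl 1, by simpa using hvK⟩
  obtain ⟨C, hC⟩ : ∃ C, ∀ u ∈ K, ‖u‖ ≤ C := by
    obtain ⟨C, hC⟩ := hKc.isBounded.subset_closedBall 0
    exact ⟨C, fun u hu => mem_closedBall_zero_iff.mp (hC hu)⟩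
  have hSbdd : BddAbove S := by
    refine ⟨C / ‖gg z v‖, fun μ hμ => ?_⟩
    have h1 := hC _ hμ.2
    rw [norm_mul, Complex.norm_real, Real.norm_eq_abs,
      abs_of_pos (by linarith [hμ.1] : (0:ℝ) < μ)] at h1
    rw [le_div_iff₀ (norm_pos_iff.mpr hgv)]
    exact h1
  have hSclosed : IsClosed S := by
    have : S = Set.Ici (1:ℝ) ∩ ((fun μ : ℝ => (μ:ℂ) * gg z v) ⁻¹' K) := by
      ext μ; simp [hSdef, Set.mem_Ici]
    rw [this]
    exact isClosed_Ici.inter (hKc.isClosed.preimage (by continuity))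
  set μs := sSup S with hμs
  have hμmem : μs ∈ S := hSclosed.csSup_mem hSne hSbdd
  have hμlam : lam ≤ μs := le_csSup hSbdd ⟨hlam.le, hmem⟩
  have hμpos : (0:ℝ) < μs := by linarith [hμmem.1]
  obtain ⟨ζ, hζmem, hζeq⟩ := hμmem.2
  rcases lt_or_eq_of_le (mem_closedBall_zero_iff.mp hζmem) with hlt | heqr
  · -- interior: contradiction with maximality
    have hUopen : IsOpen (gg z '' ball (0:ℂ) r) :=
      ggOpen h2 hS (fun x hx => lt_trans (mem_ball_zero_iff.mp hx) hr1 |> mem_ball_zero_iff.mpr) isOpen_ball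
    have hmem2 : gg z ζ ∈ gg z '' ball (0:ℂ) r := ⟨ζ, mem_ball_zero_iff.mpr hlt, rfl⟩
    obtain ⟨ε, hε, hball⟩ := Metric.isOpen_iff.mp hUopen _ hmem2
    set δ := ε / (2 * ‖gg z v‖) with hδ
    have hδpos : 0 < δ := by
      apply div_pos hε
      have := norm_pos_iff.mpr hgv; linarith
    have hnear : ((μs + δ : ℝ):ℂ) * gg z v ∈ ball (gg z ζ) ε := by
      rw [mem_ball, dist_eq_norm, hζeq]
      have : ((μs + δ : ℝ):ℂ) * gg z v - ((μs:ℝ):ℂ) * gg z v = ((δ:ℝ):ℂ) * gg z v := by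
        push_cast; ring
      rw [this, norm_mul, Complex.norm_real, Real.norm_eq_abs, abs_of_pos hδpos, hδ]
      have hn := norm_pos_iff.mpr hgv
      rw [div_mul_eq_mul_div, mul_comm]
      rw [div_lt_iff₀ (by linarith : (0:ℝ) < 2 * ‖gg z v‖)]
      nlinarith
    have hinK : ((μs + δ : ℝ):ℂ) * gg z v ∈ K := by
      apply Set.image_mono ball_subset_closedBall
      exact hball hnear
    have : μs + δ ≤ μs := le_csSup hSbdd ⟨by linarith [hμmem.1], hinK⟩
    linarith
  · -- boundary: polar
    have hζ : ζ = v := by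
      apply polar h2 hS hS1 hr0 hr1 heqr hv hμpos
      rw [hζeq]
    rw [hζ] at hζeq
    have hc : (1 - ((μs:ℝ):ℂ)) * gg z v = 0 := by linear_combination hζeq
    rcases mul_eq_zero.mp hc with h3 | h3
    · have h4 : ((μs:ℝ):ℂ) = 1 := by linear_combination -h3
      have h5 : μs = 1 := by exact_mod_cast h4
      linarith
    · exact absurd h3 hgv

lemma starMain (h2 : ∀ n, 2 ≤ ‖z n‖)
    (hS : Summable fun n => 1/(‖z n‖ - 1))
    (hS1 : ∑' n, 1/(‖z n‖ - 1) ≤ 1)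
    {w₀ : ℂ} (hw₀ : ‖w₀‖ < 1) {t : ℝ} (ht0 : 0 ≤ t) (ht1 : t ≤ 1) :
    ∃ v, ‖v‖ < 1 ∧ gg z v = (t:ℂ) * gg z w₀ := by
  rcases eq_or_lt_of_le ht0 with h0 | ht0p
  · exact ⟨0, by norm_num, by rw [gg_zero, ← h0]; simp⟩
  rcases eq_or_lt_of_le ht1 with h1 | ht1l
  · exact ⟨w₀, hw₀, by rw [h1]; simp⟩
  by_cases hw0 : w₀ = 0
  · exact ⟨0, by norm_num, by rw [gg_zero, hw0, gg_zero]; simp⟩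
  have hgw : gg z w₀ ≠ 0 := gg_ne_zero hw0
  set r : ℝ := (1 + ‖w₀‖)/2 with hrdef
  have hr0 : 0 < r := by positivity
  have hrw : ‖w₀‖ < r := by rw [hrdef]; linarith
  have hr1 : r < 1 := by rw [hrdef]; linarith
  set K := gg z '' closedBall (0:ℂ) r with hKdef
  set U := gg z '' ball (0:ℂ) r with hUdef
  have hKc : IsCompact K := (isCompact_closedBall (0:ℂ) r).image_of_continuousOn
    ((gdiff h2 hS).continuousOn.mono (closedBall_subset_ball hr1))
  have hUopen : IsOpen U := ggOpen h2 hS (ball_subset_ball hr1.le) isOpen_ball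
  have hsub : U ⊆ K := Set.image_mono ball_subset_closedBall
  have hw₀K : gg z w₀ ∈ K := ⟨w₀, mem_closedBall_zero_iff.mpr hrw.le, rfl⟩
  -- goal reduces to showing the point is in U
  suffices hfin : (t:ℂ) * gg z w₀ ∈ U by
    obtain ⟨v, hv, hveq⟩ := hfin
    exact ⟨v, lt_trans (mem_ball_zero_iff.mp hv) hr1, hveq⟩
  by_cases hK : (t:ℂ) * gg z w₀ ∈ K
  · obtain ⟨ζ, hζmem, hζeq⟩ := hK
    rcases lt_or_eq_of_le (mem_closedBall_zero_iff.mp hζmem) with hlt | heqr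
    · exact ⟨ζ, mem_ball_zero_iff.mpr hlt, hζeq⟩
    · exfalso
      have htne : (t:ℂ) ≠ 0 := by exact_mod_cast ht0p.ne'
      have hinv : ((1/t : ℝ):ℂ) * gg z ζ = gg z w₀ := by
        rw [hζeq]
        push_cast
        field_simp
      have := noExt h2 hS hS1 hr0 hr1 heqr (lam := 1/t)
        (by rw [one_div]; exact (one_lt_inv₀ ht0p).mpr ht1l)
      rw [hinv] at this
      exact this hw₀K
  · exfalso
    set J := {s : ℝ | s ∈ Set.Icc t 1 ∧ (s:ℂ) * gg z w₀ ∉ K} with hJdef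
    have htJ : t ∈ J := ⟨⟨le_refl t, ht1⟩, hK⟩
    have hJne : J.Nonempty := ⟨t, htJ⟩
    have hJbdd : BddAbove J := ⟨1, fun x hx => hx.1.2⟩
    set sb := sSup J with hsbdef
    have htsb : t ≤ sb := le_csSup hJbdd htJ
    have hsb1 : sb ≤ 1 := csSup_le hJne (fun x hx => hx.1.2)
    have hsbpos : 0 < sb := lt_of_lt_of_le ht0p htsb
    have h1J : (1:ℝ) ∉ J := by
      intro h
      apply h.2
      simpa using hw₀K
    have hsbK : (sb:ℂ) * gg z w₀ ∈ K := by
      by_contra hn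
      have hsbne1 : sb ≠ 1 := by
        intro h
        rw [h] at hn
        exact h1J ⟨⟨ht1, le_refl 1⟩, hn⟩
      have hsblt : sb < 1 := lt_of_le_of_ne hsb1 hsbne1
      have hcont : Continuous (fun s : ℝ => (s:ℂ) * gg z w₀) := by continuity
      have hpre : IsOpen ((fun s : ℝ => (s:ℂ) * gg z w₀) ⁻¹' Kᶜ) :=
        hKc.isClosed.isOpen_compl.preimage hcont
      obtain ⟨δ, hδpos, hδ⟩ := Metric.isOpen_iff.mp hpre sb (by simpa using hn)
      set s' := min 1 (sb + δ/2) with hs'def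
      have hs'gt : sb < s' := lt_min hsblt (by linarith)
      have hs'J : s' ∈ J := by
        refine ⟨⟨le_trans htsb hs'gt.le, min_le_left _ _⟩, ?_⟩
        have hmem : s' ∈ ball sb δ := by
          rw [mem_ball, Real.dist_eq, abs_lt]
          constructor
          · have : s' ≤ sb + δ/2 := min_le_right _ _
            linarith
          · have : s' ≤ sb + δ/2 := min_le_right _ _
            linarith
        simpa using hδ hmem
      have := le_csSup hJbdd hs'J
      linarith
    obtain ⟨ζ, hζmem, hζeq⟩ := hsbK
    rcases lt_or_eq_of_le (mem_closedBall_zero_iff.mp hζmem) with hlt | heqr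
    · have hmemU : gg z ζ ∈ U := ⟨ζ, mem_ball_zero_iff.mpr hlt, rfl⟩
      obtain ⟨ε, hεpos, hball⟩ := Metric.isOpen_iff.mp hUopen _ hmemU
      have hgwpos : 0 < ‖gg z w₀‖ := norm_pos_iff.mpr hgw
      set ε' := ε / (2 * ‖gg z w₀‖) with hε'def
      have hε'pos : 0 < ε' := by positivity
      obtain ⟨s', hs'J, hs'gt⟩ := exists_lt_of_lt_csSup hJne (by linarith : sb - ε' < sb)
      have hs'le : s' ≤ sb := le_csSup hJbdd hs'J
      have hmemb : (s':ℂ) * gg z w₀ ∈ ball (gg z ζ) ε := by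
        rw [mem_ball, dist_eq_norm, hζeq]
        have he : (s':ℂ) * gg z w₀ - (sb:ℂ) * gg z w₀ = ((s' - sb : ℝ):ℂ) * gg z w₀ := by
          push_cast; ring
        rw [he, norm_mul, Complex.norm_real, Real.norm_eq_abs]
        have habs : |s' - sb| ≤ ε' := abs_le.mpr ⟨by linarith, by linarith⟩
        calc |s' - sb| * ‖gg z w₀‖ ≤ ε' * ‖gg z w₀‖ := by gcongr
          _ = ε / 2 := by
              rw [hε'def, div_mul_eq_mul_div, mul_comm (2:ℝ) ‖gg z w₀‖,
                mul_comm ε ‖gg z w₀‖, mul_div_mul_left _ _ hgwpos.ne']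
          _ < ε := by linarith
      exact hs'J.2 (hsub (hball hmemb))
    · rcases eq_or_lt_of_le hsb1 with hsbeq | hsblt
      · rw [hsbeq] at hζeq
        have hζw : ζ = w₀ := by
          apply ggInj h2 hS hS1 (mem_ball_zero_iff.mpr (heqr.trans_lt hr1))
            (mem_ball_zero_iff.mpr hw₀)
          simpa using hζeq
        rw [hζw] at heqr
        exact absurd heqr (ne_of_lt hrw)
      · have hsbne : (sb:ℂ) ≠ 0 := by exact_mod_cast hsbpos.ne'
        have hinv : ((1/sb : ℝ):ℂ) * gg z ζ = gg z w₀ := by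
          rw [hζeq]
          push_cast
          field_simp
        have hne := noExt h2 hS hS1 hr0 hr1 heqr (lam := 1/sb)
          (by rw [one_div]; exact (one_lt_inv₀ hsbpos).mpr hsblt)
        rw [hinv] at hne
        exact hne hw₀K

end

/-- Sufficiency direction of the Shah–Trimble theorem: if all `z n` have the same argument,
`|z n| > 1`, `∑ 1/|z n|` converges, `f w = w ∏ (1 - w / z n)`, and `∑ 1/(|z n| - 1) ≤ 1`,
then `f` is univalent on the unit disk and maps it onto a domain starlike w.r.t. `0`. -/
theorem stmt11 (z : ℕ → ℂ) (θ : ℝ) (harg : ∀ n, (z n).arg = θ)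
    (hmod : ∀ n, 1 < ‖z n‖)
    (hsum : Summable fun n => 1 / ‖z n‖)
    (f : ℂ → ℂ)
    (hmul : ∀ w : ℂ, Multipliable fun n => 1 - w / z n)
    (hf : ∀ w : ℂ, f w = w * ∏' n, (1 - w / z n))
    (h : ∑' n, 1 / (‖z n‖ - 1) ≤ 1) :
    Set.InjOn f (ball (0 : ℂ) 1) ∧ StarConvex ℝ (0 : ℂ) (f '' ball (0 : ℂ) 1) := by
  -- preliminary: summability of 1/(|z n| - 1)
  have hS : Summable fun n => 1/(‖z n‖ - 1) := by
    have htend : Filter.Tendsto (fun n => 1 / ‖z n‖) Filter.atTop (nhds 0) :=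
      hsum.tendsto_atTop_zero
    have hev : ∀ᶠ n in Filter.atTop, ‖1/(‖z n‖ - 1)‖ ≤ 2 * (1/‖z n‖) := by
      filter_upwards [htend.eventually_lt_const (by norm_num : (0:ℝ) < 1/2)] with n hn
      have ha := hmod n
      have hapos : (0:ℝ) < ‖z n‖ := by linarith
      have ha2 : 2 < ‖z n‖ := by
        rw [div_lt_div_iff₀ hapos (by norm_num : (0:ℝ) < 2)] at hn
        linarith
      rw [Real.norm_eq_abs, abs_of_pos (one_div_pos.mpr (by linarith : (0:ℝ) < ‖z n‖ - 1))]
      rw [mul_one_div, div_le_div_iff₀ (by linarith) hapos]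
      linarith
    exact Summable.of_norm_bounded_eventually_nat (hsum.mul_left 2) hev
  have h2 : ∀ n, 2 ≤ ‖z n‖ := by
    intro n
    have hterm : 1/(‖z n‖ - 1) ≤ 1 := by
      calc 1/(‖z n‖ - 1) ≤ ∑' m, 1/(‖z m‖ - 1) := by
            apply Summable.le_tsum hS n
            intro m _
            have := hmod m
            exact le_of_lt (one_div_pos.mpr (by linarith))
        _ ≤ 1 := h
    have := hmod n
    rw [div_le_one (by linarith)] at hterm
    linarith
  -- pointwise equality of f with gg
  have hfg : ∀ w : ℂ, ‖w‖ ≤ 1 → f w = gg z w := by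
    intro w hw
    rw [hf w, gg, prodF h2 hS hw]
  constructor
  · intro a ha b hb heq
    apply ggInj h2 hS h ha hb
    rw [← hfg a (mem_ball_zero_iff.mp ha).le, ← hfg b (mem_ball_zero_iff.mp hb).le]
    exact heq
  · have himg : f '' ball (0:ℂ) 1 = gg z '' ball (0:ℂ) 1 :=
      Set.image_congr (fun w hw => hfg w (mem_ball_zero_iff.mp hw).le)
    rw [himg]
    intro y hy a b ha hb hab
    obtain ⟨w₀, hw₀, rfl⟩ := hy
    obtain ⟨v, hv, hveq⟩ := starMain h2 hS h (mem_ball_zero_iff.mp hw₀) hb (by linarith)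
    refine ⟨v, mem_ball_zero_iff.mpr hv, ?_⟩
    rw [hveq]
    simp [Complex.real_smul]
end

section
/- For ν > -1 the function Φ_ν(z) = J_{ν+1}(z) I_ν(z) + J_ν(z) I_{ν+1}(z) has an infinite sequence of positive zeros γ_{ν,1} < γ_{ν,2} < ..., and these satisfy the interlacing inequalities j_{ν,n} < γ_{ν,n} < j_{ν,n+1} and γ_{ν,n} < j_{ν+1,n} for all n ≥ 1, where j_{ν,n} is the n-th positive zero of J_ν. -/
noncomputable def besselJr (ν x : ℝ) : ℝ :=
  (x / 2) ^ ν * ∑' m : ℕ, (-1) ^ m * (x / 2) ^ (2 * m) / (m.factorial * Real.Gamma (ν + m + 1))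

noncomputable def besselIr (ν x : ℝ) : ℝ :=
  (x / 2) ^ ν * ∑' m : ℕ, (x / 2) ^ (2 * m) / (m.factorial * Real.Gamma (ν + m + 1))

/-- The cross product `Φ_ν(x) = J_{ν+1}(x) I_ν(x) + J_ν(x) I_{ν+1}(x)`. -/
noncomputable def crossProd (ν x : ℝ) : ℝ :=
  besselJr (ν + 1) x * besselIr ν x + besselJr ν x * besselIr (ν + 1) x

open Filter Set Topology

namespace BAux

variable {ε ν : ℝ}


noncomputable def sTerm (ε ν : ℝ) (m : ℕ) (x : ℝ) : ℝ :=
  ε ^ m * (x / 2) ^ (2 * m) / (m.factorial * Real.Gamma (ν + m + 1))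

noncomputable def sFun (ε ν x : ℝ) : ℝ := ∑' m : ℕ, sTerm ε ν m x

lemma arg_pos {ν : ℝ} (hν : -1 < ν) (m : ℕ) : 0 < ν + m + 1 := by
  have : (0:ℝ) ≤ m := Nat.cast_nonneg m
  linarith

lemma gamma_pos {ν : ℝ} (hν : -1 < ν) (m : ℕ) : 0 < Real.Gamma (ν + m + 1) :=
  Real.Gamma_pos_of_pos (arg_pos hν m)

lemma gamma_succ {ν : ℝ} (hν : -1 < ν) (m : ℕ) :
    Real.Gamma (ν + (m + 1 : ℕ) + 1) = (ν + m + 1) * Real.Gamma (ν + m + 1) := by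
  have h : ν + ((m : ℝ) + 1) + 1 = (ν + m + 1) + 1 := by ring
  push_cast
  rw [h, Real.Gamma_add_one (ne_of_gt (arg_pos hν m))]

lemma sTerm_abs {ε ν : ℝ} (hν : -1 < ν) (hε : |ε| = 1) (m : ℕ) (x : ℝ) :
    |sTerm ε ν m x| = |x / 2| ^ (2 * m) / (m.factorial * Real.Gamma (ν + m + 1)) := by
  have h1 : (0:ℝ) < m.factorial * Real.Gamma (ν + m + 1) :=
    mul_pos (by exact_mod_cast m.factorial_pos) (gamma_pos hν m)
  rw [sTerm, abs_div, abs_mul, abs_pow, abs_pow, hε, one_pow, one_mul, abs_of_pos h1]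

lemma summable_sTerm {ε ν : ℝ} (hν : -1 < ν) (hε : |ε| = 1) (x : ℝ) :
    Summable (fun m => sTerm ε ν m x) := by
  apply summable_of_ratio_norm_eventually_le (r := 1/2) (by norm_num)
  have ht : Tendsto (fun m : ℕ => ((m:ℝ) + 1) * (ν + m + 1)) atTop atTop := by
    apply Tendsto.atTop_mul_atTop₀
    · exact tendsto_atTop_add_const_right _ 1 tendsto_natCast_atTop_atTop
    · have := tendsto_atTop_add_const_right atTop (ν + 1) tendsto_natCast_atTop_atTop
      apply this.congr; intro m; ring
  filter_upwards [ht.eventually_ge_atTop (2 * (x/2)^2)] with m hm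
  have hfac : (0:ℝ) < m.factorial := by exact_mod_cast m.factorial_pos
  have hΓ := gamma_pos hν m
  have hm1 : (0:ℝ) < (m:ℝ) + 1 := by positivity
  have hargm : 0 < ν + m + 1 := arg_pos hν m
  rw [Real.norm_eq_abs, Real.norm_eq_abs, sTerm_abs hν hε, sTerm_abs hν hε,
    gamma_succ hν m]
  have hfs : ((m+1).factorial : ℝ) = ((m:ℝ)+1) * m.factorial := by
    rw [Nat.factorial_succ]; push_cast; ring
  rw [hfs]
  have hpow : |x/2| ^ (2 * (m+1)) = |x/2| ^ (2*m) * (x/2)^2 := by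
    rw [show 2*(m+1) = 2*m + 2 by ring, pow_add, sq_abs]
  rw [hpow]
  have key : (x/2)^2 / (((m:ℝ)+1) * (ν + m + 1)) ≤ 1/2 := by
    rw [div_le_iff₀ (by positivity)]
    nlinarith
  have hnn : 0 ≤ |x/2| ^ (2*m) / (m.factorial * Real.Gamma (ν + m + 1)) := by positivity
  calc |x/2|^(2*m) * (x/2)^2 / (((m:ℝ)+1) * m.factorial * ((ν + m + 1) * Real.Gamma (ν + m + 1)))
      = (|x/2|^(2*m) / (m.factorial * Real.Gamma (ν + m + 1))) *
        ((x/2)^2 / (((m:ℝ)+1) * (ν + m + 1))) := by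
        field_simp
    _ ≤ (|x/2|^(2*m) / (m.factorial * Real.Gamma (ν + m + 1))) * (1/2) := by
        exact mul_le_mul_of_nonneg_left key hnn
    _ = 1/2 * (|x/2|^(2*m) / (m.factorial * Real.Gamma (ν + m + 1))) := by ring


noncomputable def sTermD (ε ν : ℝ) (m : ℕ) (x : ℝ) : ℝ :=
  ε ^ m * ((m : ℝ) * (x / 2) ^ (2 * m - 1)) / (m.factorial * Real.Gamma (ν + m + 1))

variable {ε ν : ℝ}



lemma hasDerivAt_sTerm (m : ℕ) (x : ℝ) :
    HasDerivAt (fun y => sTerm ε ν m y) (sTermD ε ν m x) x := by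
  have h0 : HasDerivAt (fun y : ℝ => y / 2) (1/2) x := (hasDerivAt_id x).div_const 2
  have h1 := h0.pow (2*m)
  have h2 := (h1.const_mul (ε ^ m)).div_const ((m.factorial : ℝ) * Real.Gamma (ν + m + 1))
  refine h2.congr_deriv ?_
  rw [sTermD]
  push_cast
  ring

lemma sTermD_abs_le {ν : ℝ} (hν : -1 < ν) (hε : |ε| = 1) {y R : ℝ} (hy : |y| ≤ R) (m : ℕ) :
    ‖sTermD ε ν m y‖ ≤ (m : ℝ) * (R/2) ^ (2*m - 1) / (m.factorial * Real.Gamma (ν + m + 1)) := by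
  have hΓ := gamma_pos hν m
  have hfac : (0:ℝ) < m.factorial := by exact_mod_cast m.factorial_pos
  have hR : 0 ≤ R := le_trans (abs_nonneg y) hy
  rw [Real.norm_eq_abs, sTermD, abs_div, abs_mul, abs_pow, hε, one_pow, one_mul,
    abs_of_pos (mul_pos hfac hΓ), abs_mul, Nat.abs_cast, abs_pow]
  have hy2 : |y/2| ≤ R/2 := by
    rw [abs_div, abs_two]
    linarith
  gcongr


lemma summable_bound {ν : ℝ} (hν : -1 < ν) {R : ℝ} (hR : 0 < R) :
    Summable (fun m : ℕ => (m : ℝ) * (R/2) ^ (2*m - 1) / (m.factorial * Real.Gamma (ν + m + 1))) := by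
  apply summable_of_ratio_norm_eventually_le (r := 1/2) (by norm_num)
  have ht : Tendsto (fun m : ℕ => (m:ℝ) * (ν + m + 1)) atTop atTop := by
    apply Tendsto.atTop_mul_atTop₀ tendsto_natCast_atTop_atTop
    have := tendsto_atTop_add_const_right atTop (ν + 1) tendsto_natCast_atTop_atTop
    apply this.congr; intro m; ring
  filter_upwards [ht.eventually_ge_atTop (2 * (R/2)^2), eventually_ge_atTop 1] with m hm hm1
  obtain ⟨k, rfl⟩ : ∃ k, m = k + 1 := ⟨m - 1, by omega⟩
  have hΓ := gamma_pos (m := k+1) hν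
  have hΓ2 := gamma_pos (m := k+2) hν
  have harg : (0:ℝ) < ν + (k+1:ℕ) + 1 := by
    have : (0:ℝ) ≤ (k+1:ℕ) := Nat.cast_nonneg _
    linarith
  have hgs : Real.Gamma (ν + (k+2:ℕ) + 1) = (ν + (k+1:ℕ) + 1) * Real.Gamma (ν + (k+1:ℕ) + 1) := by
    have h : ν + ((k:ℝ) + 2) + 1 = (ν + ((k:ℝ)+1) + 1) + 1 := by ring
    push_cast
    push_cast at harg
    rw [h, Real.Gamma_add_one (ne_of_gt harg)]
  have hfac : (0:ℝ) < (k+1).factorial := by exact_mod_cast (k+1).factorial_pos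
  have hfs : (((k+2)).factorial : ℝ) = ((k:ℝ)+2) * (k+1).factorial := by
    rw [show k+2 = (k+1)+1 by ring, Nat.factorial_succ]; push_cast; ring
  have e1 : 2*(k+1+1) - 1 = (2*(k+1) - 1) + 2 := by omega
  have hR2 : (0:ℝ) < R/2 := by linarith
  rw [Real.norm_eq_abs, Real.norm_eq_abs, abs_of_nonneg (by positivity), abs_of_nonneg (by positivity)]
  rw [show k+1+1 = k+2 from rfl, hfs, hgs, e1, pow_add]
  push_cast
  push_cast
  push_cast at hΓ hm
  set G := Real.Gamma (ν + ((k:ℝ) + 1) + 1) with hGdef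
  set a := ((R:ℝ)/2) ^ (2*(k+1) - 1) with hadef
  set F := (((k+1).factorial : ℕ) : ℝ) with hFdef
  have hG : 0 < G := hΓ
  have ha : 0 < a := by rw [hadef]; positivity
  have hFp : 0 < F := hfac
  have key2 : 2*(R/2)^2 ≤ ((k:ℝ)+1)*(ν+((k:ℝ)+1)+1) := hm
  have harg2 : (0:ℝ) < ν + ((k:ℝ)+1) + 1 := by push_cast at harg; linarith
  have hd1 : (0:ℝ) < ((k:ℝ)+2) * F * ((ν+((k:ℝ)+1)+1) * G) :=
    mul_pos (mul_pos (by positivity) hFp) (mul_pos harg2 hG)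
  have hd2 : (0:ℝ) < F * G := mul_pos hFp hG
  rw [← mul_div_assoc, div_le_div_iff₀ hd1 hd2]
  have h := mul_le_mul_of_nonneg_left key2 (le_of_lt (mul_pos (mul_pos ha hFp) hG))
  nlinarith [h, sq_nonneg ((R:ℝ)/2), Nat.cast_nonneg (α := ℝ) k, mul_pos (mul_pos ha hFp) hG]

lemma summable_sTermD {ν : ℝ} (hν : -1 < ν) (hε : |ε| = 1) (x : ℝ) :
    Summable (fun m => sTermD ε ν m x) := by
  apply Summable.of_norm_bounded (summable_bound hν (R := |x| + 1) (by positivity))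
  intro m
  exact sTermD_abs_le hν hε (by linarith) m

lemma tsum_sTermD {ν : ℝ} (hν : -1 < ν) (hε : |ε| = 1) (x : ℝ) :
    ∑' m, sTermD ε ν m x = ε * (x/2) * sFun ε (ν+1) x := by
  rw [Summable.tsum_eq_zero_add (summable_sTermD hν hε x)]
  have h0 : sTermD ε ν 0 x = 0 := by simp [sTermD]
  rw [h0, zero_add, sFun, ← tsum_mul_left]
  apply tsum_congr
  intro k
  have hk : (0:ℝ) < ν + k + 1 := by
    have : (0:ℝ) ≤ k := Nat.cast_nonneg k
    linarith
  have hgs : Real.Gamma (ν + (k+1:ℕ) + 1) = (ν + k + 1) * Real.Gamma (ν + k + 1) := by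
    push_cast
    rw [show ν + ((k:ℝ)+1) + 1 = (ν + k + 1) + 1 by ring, Real.Gamma_add_one (ne_of_gt hk)]
  have hΓ := gamma_pos hν (m := k) (ν := ν)
  have hΓ' : Real.Gamma (ν + 1 + k + 1) = Real.Gamma (ν + k + 1) * (ν + k + 1) := by
    rw [show ν + 1 + (k:ℝ) + 1 = (ν + k + 1) + 1 by ring, Real.Gamma_add_one (ne_of_gt hk)]
    ring
  rw [sTermD, sTerm, hgs, hΓ']
  have e1 : 2*(k+1) - 1 = 2*k + 1 := by omega
  rw [e1, Nat.factorial_succ]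
  have hfne : ((k.factorial : ℝ)) ≠ 0 := by exact_mod_cast k.factorial_pos.ne'
  have hΓne : Real.Gamma (ν + k + 1) ≠ 0 := ne_of_gt hΓ
  push_cast
  rw [pow_succ ε k, pow_succ (x/2) (2*k)]
  field_simp

lemma sFun_hasDerivAt {ν : ℝ} (hν : -1 < ν) (hε : |ε| = 1) (x : ℝ) :
    HasDerivAt (sFun ε ν) (ε * (x/2) * sFun ε (ν+1) x) x := by
  set R := |x| + 1 with hR
  have hR0 : (0:ℝ) < R := by positivity
  have hmem : x ∈ Ioo (-R) R := by
    constructor <;> [nlinarith [abs_nonneg x, neg_abs_le x]; nlinarith [le_abs_self x]]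
  have key := hasDerivAt_tsum_of_isPreconnected
    (u := fun m : ℕ => (m : ℝ) * (R/2) ^ (2*m - 1) / (m.factorial * Real.Gamma (ν + m + 1)))
    (g := fun m y => sTerm ε ν m y) (g' := fun m y => sTermD ε ν m y)
    (summable_bound hν hR0) isOpen_Ioo (convex_Ioo _ _).isPreconnected
    (fun m y _ => hasDerivAt_sTerm m y)
    (fun m y hy => sTermD_abs_le hν hε (by
      rcases hy with ⟨h1, h2⟩
      rw [abs_le]; constructor <;> linarith) m)
    hmem (summable_sTerm hν hε x) hmem
  rw [tsum_sTermD hν hε x] at key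
  exact key

lemma sFun_zero (ε ν : ℝ) : sFun ε ν 0 = 1 / Real.Gamma (ν + 1) := by
  rw [sFun, tsum_eq_single 0]
  · simp [sTerm]
  · intro m hm
    rw [sTerm, zero_div, zero_pow (by omega : 2*m ≠ 0)]
    simp

lemma sFun_one_pos {ν : ℝ} (hν : -1 < ν) (x : ℝ) : 0 < sFun 1 ν x := by
  refine Summable.tsum_pos (summable_sTerm hν (by norm_num) x) ?_ 0 ?_
  · intro m
    rw [sTerm, one_pow, one_mul, pow_mul]
    have := gamma_pos hν (m := m) (ν := ν)
    positivity
  · rw [sTerm]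
    have h0 := gamma_pos hν (m := 0) (ν := ν)
    rw [pow_zero, pow_zero, Nat.factorial_zero]
    rw [Nat.cast_one, one_mul, one_mul]
    positivity

lemma sFun_rec {ν : ℝ} (hν : -1 < ν) (hε : |ε| = 1) (x : ℝ) :
    2 * sFun ε ν x = (2*ν+2) * sFun ε (ν+1) x + ε * (x^2/2) * sFun ε (ν+2) x := by
  have hν1 : -1 < ν + 1 := by linarith
  have hν2 : -1 < ν + 2 := by linarith
  have h1 := summable_sTerm hν hε x
  have h2 := summable_sTerm hν1 hε x
  have h3 := summable_sTerm hν2 hε x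
  set D : ℕ → ℝ := fun m => Nat.rec 0 (fun k _ => ε * (x^2/2) * sTerm ε (ν+2) k x) m with hD
  have hDsucc : ∀ k, D (k+1) = ε * (x^2/2) * sTerm ε (ν+2) k x := fun k => rfl
  have hDsum : Summable D := by
    rw [← summable_nat_add_iff 1]
    simpa [hDsucc] using h3.mul_left (ε * (x^2/2))
  have hDtsum : ∑' m, D m = ε * (x^2/2) * sFun ε (ν+2) x := by
    rw [Summable.tsum_eq_zero_add hDsum]
    simp only [hDsucc]
    rw [show D 0 = 0 from rfl, zero_add, sFun, ← tsum_mul_left]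
  rw [sFun, sFun, ← tsum_mul_left, ← tsum_mul_left, ← hDtsum,
    ← Summable.tsum_add (h2.mul_left ((2:ℝ)*ν+2)) hDsum]
  apply tsum_congr
  intro m
  match m with
  | 0 =>
    have hk : (0:ℝ) < ν + 1 := by linarith
    have hgs : Real.Gamma (ν + 1 + 1) = (ν + 1) * Real.Gamma (ν + 1) := by
      rw [Real.Gamma_add_one (ne_of_gt hk)]
    have hΓ : 0 < Real.Gamma (ν + 1) := Real.Gamma_pos_of_pos hk
    simp only [sTerm, show D 0 = 0 from rfl]
    push_cast
    rw [show ν + 1 + 0 + 1 = ν + 1 + 1 by ring, show ν + 0 + 1 = ν + 1 by ring, hgs]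
    field_simp
    ring
  | k+1 =>
    have hk : (0:ℝ) < ν + k + 2 := by
      have : (0:ℝ) ≤ k := Nat.cast_nonneg k
      linarith
    have hΓ : 0 < Real.Gamma (ν + k + 2) := Real.Gamma_pos_of_pos hk
    have hgs : Real.Gamma (ν + k + 2 + 1) = (ν + k + 2) * Real.Gamma (ν + k + 2) := by
      rw [Real.Gamma_add_one (ne_of_gt hk)]
    rw [hDsucc, sTerm, sTerm, sTerm]
    push_cast
    rw [show ν + 1 + ((k:ℝ)+1) + 1 = ν + k + 2 + 1 by ring,
      show ν + 2 + (k:ℝ) + 1 = ν + k + 2 + 1 by ring,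
      show ν + ((k:ℝ)+1) + 1 = ν + k + 2 by ring, hgs]
    have hfne : ((k.factorial : ℝ)) ≠ 0 := by exact_mod_cast k.factorial_pos.ne'
    have hΓne : Real.Gamma (ν + k + 2) ≠ 0 := ne_of_gt hΓ
    rw [Nat.factorial_succ]
    push_cast
    rw [pow_succ ε k, show 2*(k+1) = 2*k+2 by ring, pow_add (x/2) (2*k) 2]
    field_simp
    ring


variable {ε ν : ℝ}



noncomputable def bes (ε ν x : ℝ) : ℝ := (x / 2) ^ ν * sFun ε ν x

lemma besselJr_eq (ν x : ℝ) : besselJr ν x = bes (-1) ν x := rfl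

lemma besselIr_eq (ν x : ℝ) : besselIr ν x = bes 1 ν x := by
  rw [besselIr, bes]
  congr 1
  apply tsum_congr
  intro m
  rw [sTerm, one_pow, one_mul]

lemma sFun_continuousAt (hν : -1 < ν) (hε : |ε| = 1) (x : ℝ) :
    ContinuousAt (sFun ε ν) x := (sFun_hasDerivAt hν hε x).continuousAt

lemma bes_continuousAt (hν : -1 < ν) (hε : |ε| = 1) {x : ℝ} (hx : 0 < x) :
    ContinuousAt (bes ε ν) x := by
  apply ContinuousAt.mul ?_ (sFun_continuousAt hν hε x)
  exact (continuousAt_id.div_const 2).rpow_const (Or.inl (by positivity))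

lemma besselJr_continuousAt (hν : -1 < ν) {x : ℝ} (hx : 0 < x) :
    ContinuousAt (besselJr ν) x := by
  have := bes_continuousAt (ε := -1) hν (by norm_num) hx
  simpa [funext (besselJr_eq ν)] using this

lemma besselIr_continuousAt (hν : -1 < ν) {x : ℝ} (hx : 0 < x) :
    ContinuousAt (besselIr ν) x := by
  have := bes_continuousAt (ε := 1) hν (by norm_num) hx
  have he : besselIr ν = bes 1 ν := funext (besselIr_eq ν)
  rw [he]; exact this

lemma besselIr_pos (hν : -1 < ν) {x : ℝ} (hx : 0 < x) : 0 < besselIr ν x := by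
  rw [besselIr_eq]
  exact mul_pos (Real.rpow_pos_of_pos (by positivity) ν) (sFun_one_pos hν x)

-- derivative identities
lemma bes_deriv_down (hν : -1 < ν) (hε : |ε| = 1) {x : ℝ} (hx : 0 < x) :
    HasDerivAt (fun y => y ^ (-ν) * bes ε ν y) (ε * (x ^ (-ν) * bes ε (ν+1) x)) x := by
  have hev : (fun y : ℝ => (2:ℝ) ^ (-ν) * sFun ε ν y) =ᶠ[𝓝 x]
      (fun y => y ^ (-ν) * bes ε ν y) := by
    filter_upwards [eventually_gt_nhds hx] with y hy
    rw [bes]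
    have h1 : (y/2 : ℝ) ^ ν = y ^ ν / (2:ℝ) ^ ν := Real.div_rpow hy.le (by norm_num : (0:ℝ) ≤ 2) ν
    have h2 : y ^ (-ν) = (y ^ ν)⁻¹ := Real.rpow_neg hy.le ν
    have h3 : ((2:ℝ)) ^ (-ν) = ((2:ℝ) ^ ν)⁻¹ := Real.rpow_neg (by norm_num) ν
    have hyν : (0:ℝ) < y ^ ν := Real.rpow_pos_of_pos hy ν
    have h2ν : (0:ℝ) < (2:ℝ) ^ ν := Real.rpow_pos_of_pos (by norm_num) ν
    rw [h1, h2, h3]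
    field_simp
  have hd := (sFun_hasDerivAt hν hε x).const_mul ((2:ℝ) ^ (-ν))
  have := hd.congr_of_eventuallyEq hev.symm
  refine this.congr_deriv ?_
  rw [bes]
  have h1 : (x/2 : ℝ) ^ (ν+1) = x ^ (ν+1) / (2:ℝ) ^ (ν+1) := Real.div_rpow hx.le (by norm_num : (0:ℝ) ≤ 2) _
  have h2 : x ^ (ν + 1) = x ^ ν * x := Real.rpow_add_one hx.ne' ν
  have h3 : (2:ℝ) ^ (ν + 1) = (2:ℝ) ^ ν * 2 := Real.rpow_add_one (by norm_num) ν
  have h4 : x ^ (-ν) = (x ^ ν)⁻¹ := Real.rpow_neg hx.le ν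
  have h5 : ((2:ℝ)) ^ (-ν) = ((2:ℝ) ^ ν)⁻¹ := Real.rpow_neg (by norm_num) ν
  have hxν : (0:ℝ) < x ^ ν := Real.rpow_pos_of_pos hx ν
  have h2ν : (0:ℝ) < (2:ℝ) ^ ν := Real.rpow_pos_of_pos (by norm_num) ν
  rw [h1, h2, h3, h4, h5]
  field_simp

lemma bes_deriv_up (hν : -1 < ν) (hε : |ε| = 1) {x : ℝ} (hx : 0 < x) :
    HasDerivAt (fun y => y ^ (ν+1) * bes ε (ν+1) y) (x ^ (ν+1) * bes ε ν x) x := by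
  have hν1 : -1 < ν + 1 := by linarith
  have hev : (fun y : ℝ => (y^2/2) ^ (ν+1) * sFun ε (ν+1) y) =ᶠ[𝓝 x]
      (fun y => y ^ (ν+1) * bes ε (ν+1) y) := by
    filter_upwards [eventually_gt_nhds hx] with y hy
    rw [bes]
    have h1 : (y/2 : ℝ) ^ (ν+1) = y ^ (ν+1) / (2:ℝ) ^ (ν+1) := Real.div_rpow hy.le (by norm_num : (0:ℝ) ≤ 2) _
    have h2 : (y^2/2 : ℝ) ^ (ν+1) = (y^2) ^ (ν+1) / (2:ℝ) ^ (ν+1) :=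
      Real.div_rpow (by positivity) (by norm_num : (0:ℝ) ≤ 2) _
    have h3 : ((y^2 : ℝ)) ^ (ν+1) = (y ^ (ν+1))^2 := by
      rw [← Real.rpow_natCast (y ^ (ν+1)) 2, ← Real.rpow_mul hy.le, ← Real.rpow_natCast y 2,
        ← Real.rpow_mul hy.le]
      norm_num
      rw [mul_comm]
    rw [h1, h2, h3]
    ring
  have hsq : HasDerivAt (fun y : ℝ => y^2/2) x x := by
    have := ((hasDerivAt_id x).pow 2).div_const 2
    refine this.congr_deriv ?_
    norm_num
  have hx2 : (0:ℝ) < x^2/2 := by positivity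
  have hpow : HasDerivAt (fun y : ℝ => (y^2/2) ^ (ν+1)) ((ν+1) * (x^2/2) ^ ν * x) x := by
    have := hsq.rpow_const (p := ν+1) (Or.inl hx2.ne')
    convert this using 1
    rw [show ν + 1 - 1 = ν by ring]
    ring
  have hd := hpow.mul (sFun_hasDerivAt hν1 hε x)
  have := hd.congr_of_eventuallyEq hev.symm
  refine this.congr_deriv ?_
  rw [bes]
  -- target : x^(ν+1) * ((x/2)^ν * sFun ε ν x) = (ν+1)*(x²/2)^ν*x*S1 + (x²/2)^{ν+1}*(ε*(x/2)*S2)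
  have hrec := sFun_rec hν hε x
  have hSν : sFun ε ν x = ((2*ν+2) * sFun ε (ν+1) x + ε * (x^2/2) * sFun ε (ν+2) x) / 2 := by
    linarith
  rw [hSν]
  have h2 : x ^ (ν + 1) = x ^ ν * x := Real.rpow_add_one hx.ne' ν
  have h3 : (x^2/2 : ℝ) ^ (ν + 1) = (x^2/2) ^ ν * (x^2/2) := Real.rpow_add_one hx2.ne' ν
  have h4 : x ^ ν * (x/2) ^ ν = (x^2/2) ^ ν := by
    rw [← Real.mul_rpow hx.le (by positivity)]
    congr 1
    ring
  rw [h2, h3, ← h4]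
  ring

lemma hasDerivAt_uJ (hν : -1 < ν) {x : ℝ} (hx : 0 < x) :
    HasDerivAt (fun y => y ^ (-ν) * besselJr ν y) (-(x ^ (-ν) * besselJr (ν+1) x)) x := by
  have h := bes_deriv_down (ε := -1) hν (by norm_num) hx
  simp only [← besselJr_eq] at h
  convert h using 1
  ring

lemma hasDerivAt_vJ (hν : -1 < ν) {x : ℝ} (hx : 0 < x) :
    HasDerivAt (fun y => y ^ (ν+1) * besselJr (ν+1) y) (x ^ (ν+1) * besselJr ν x) x := by
  have h := bes_deriv_up (ε := -1) hν (by norm_num) hx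
  simp only [← besselJr_eq] at h
  exact h

lemma hasDerivAt_uI (hν : -1 < ν) {x : ℝ} (hx : 0 < x) :
    HasDerivAt (fun y => y ^ (-ν) * besselIr ν y) (x ^ (-ν) * besselIr (ν+1) x) x := by
  have h := bes_deriv_down (ε := 1) hν (by norm_num) hx
  simp only [← besselIr_eq, one_mul] at h
  exact h

lemma hasDerivAt_vI (hν : -1 < ν) {x : ℝ} (hx : 0 < x) :
    HasDerivAt (fun y => y ^ (ν+1) * besselIr (ν+1) y) (x ^ (ν+1) * besselIr ν x) x := by
  have h := bes_deriv_up (ε := 1) hν (by norm_num) hx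
  simp only [← besselIr_eq] at h
  exact h

lemma hasDerivAt_xcross (hν : -1 < ν) {x : ℝ} (hx : 0 < x) :
    HasDerivAt (fun y => y * crossProd ν y) (2 * x * besselJr ν x * besselIr ν x) x := by
  have hev : (fun y : ℝ => (y ^ (ν+1) * besselJr (ν+1) y) * (y ^ (-ν) * besselIr ν y)
      + (y ^ (-ν) * besselJr ν y) * (y ^ (ν+1) * besselIr (ν+1) y)) =ᶠ[𝓝 x]
      (fun y => y * crossProd ν y) := by
    filter_upwards [eventually_gt_nhds hx] with y hy
    have key : y ^ (ν+1) * y ^ (-ν) = y := by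
      rw [← Real.rpow_add hy]
      norm_num
    rw [crossProd]
    linear_combination (besselJr (ν+1) y * besselIr ν y + besselJr ν y * besselIr (ν+1) y) * key
  have hd := ((hasDerivAt_vJ hν hx).mul (hasDerivAt_uI hν hx)).add
    ((hasDerivAt_uJ hν hx).mul (hasDerivAt_vI hν hx))
  have h := hd.congr_of_eventuallyEq hev.symm
  refine h.congr_deriv ?_
  have key : x ^ (ν+1) * x ^ (-ν) = x := by
    rw [← Real.rpow_add hx]
    norm_num
  linear_combination (2 * besselJr ν x * besselIr ν x) * key

lemma tendsto_vJ_zero (hν : -1 < ν) :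
    Tendsto (fun y => y ^ (ν+1) * besselJr (ν+1) y) (𝓝[>] (0:ℝ)) (𝓝 0) := by
  have hν1 : -1 < ν + 1 := by linarith
  have hev : ∀ y ∈ Ioi (0:ℝ), (y^2/2) ^ (ν+1) * sFun (-1) (ν+1) y
      = y ^ (ν+1) * besselJr (ν+1) y := by
    intro y hy
    rw [besselJr_eq, bes]
    have h1 : (y/2 : ℝ) ^ (ν+1) = y ^ (ν+1) / (2:ℝ) ^ (ν+1) := Real.div_rpow (le_of_lt hy) (by norm_num : (0:ℝ) ≤ 2) _
    have h2 : (y^2/2 : ℝ) ^ (ν+1) = (y^2) ^ (ν+1) / (2:ℝ) ^ (ν+1) :=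
      Real.div_rpow (by positivity) (by norm_num : (0:ℝ) ≤ 2) _
    have h3 : ((y^2 : ℝ)) ^ (ν+1) = (y ^ (ν+1))^2 := by
      rw [← Real.rpow_natCast (y ^ (ν+1)) 2, ← Real.rpow_mul (le_of_lt hy), ← Real.rpow_natCast y 2,
        ← Real.rpow_mul (le_of_lt hy)]
      norm_num
      rw [mul_comm]
    rw [h1, h2, h3]
    ring
  apply Tendsto.congr' (eventuallyEq_of_mem self_mem_nhdsWithin hev)
  have h1 : Tendsto (fun y : ℝ => y^2/2) (𝓝[>] (0:ℝ)) (𝓝 0) := by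
    have hc : Continuous (fun y : ℝ => y^2/2) := by fun_prop
    have h0 : Tendsto (fun y : ℝ => y^2/2) (𝓝 (0:ℝ)) (𝓝 ((0:ℝ)^2/2)) := hc.tendsto 0
    have h0' : Tendsto (fun y : ℝ => y^2/2) (𝓝[>] (0:ℝ)) (𝓝 ((0:ℝ)^2/2)) :=
      h0.mono_left nhdsWithin_le_nhds
    simpa using h0'
  have h2 : ContinuousAt (fun t : ℝ => t ^ (ν+1)) 0 :=
    Real.continuousAt_rpow_const _ _ (Or.inr (by linarith))
  have h3 : Tendsto (fun y : ℝ => (y^2/2) ^ (ν+1)) (𝓝[>] (0:ℝ)) (𝓝 0) := by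
    have := h2.tendsto.comp h1
    simpa [Real.zero_rpow (show ν+1 ≠ 0 by linarith), Function.comp_def] using this
  have h4 : Tendsto (fun y : ℝ => sFun (-1) (ν+1) y) (𝓝[>] (0:ℝ))
      (𝓝 (sFun (-1) (ν+1) 0)) :=
    ((sFun_continuousAt hν1 (by norm_num) 0).tendsto).mono_left nhdsWithin_le_nhds
  have := h3.mul h4
  simpa using this

lemma besselJr_pos_near_zero (hμ : -1 < ν) :
    ∃ δ > 0, ∀ y : ℝ, 0 < y → y < δ → 0 < besselJr ν y := by
  have hΓ : 0 < Real.Gamma (ν + 1) := Real.Gamma_pos_of_pos (by linarith)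
  have hval : 0 < sFun (-1) ν 0 := by rw [sFun_zero]; positivity
  have hev : ∀ᶠ y in 𝓝 (0:ℝ), 0 < sFun (-1) ν y :=
    (sFun_continuousAt hμ (by norm_num) 0).eventually (eventually_gt_nhds hval)
  obtain ⟨δ, hδ, h⟩ := Metric.eventually_nhds_iff.mp hev
  refine ⟨δ, hδ, fun y hy0 hyδ => ?_⟩
  rw [besselJr_eq, bes]
  refine mul_pos (Real.rpow_pos_of_pos (by positivity) ν) (h ?_)
  rw [Real.dist_eq, sub_zero, abs_of_pos hy0]
  exact hyδ






/-- sign propagation on a zero-free interval -/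
lemma sign_propagate {f : ℝ → ℝ} {x y : ℝ} (hxy : x ≤ y) (hc : ContinuousOn f (Icc x y))
    (hnz : ∀ t ∈ Icc x y, f t ≠ 0) (hx : 0 < f x) : 0 < f y := by
  rcases (hnz y (right_mem_Icc.mpr hxy)).lt_or_gt with h | h
  · exfalso
    obtain ⟨c, hc1, hc2⟩ := intermediate_value_Icc' hxy hc (show (0:ℝ) ∈ Icc (f y) (f x) from ⟨h.le, hx.le⟩)
    exact hnz c hc1 hc2
  · exact h

lemma besselJr_continuousOn (hν : -1 < ν) {a b : ℝ} (ha : 0 < a) :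
    ContinuousOn (besselJr ν) (Icc a b) := fun t ht =>
  (besselJr_continuousAt hν (lt_of_lt_of_le ha ht.1)).continuousWithinAt

/-- dichotomy of sign on a zero-free interval -/
lemma dichotomy (hν : -1 < ν) {a b : ℝ} (h0a : 0 < a) (hab : a < b)
    (hnz : ∀ x, a < x → x < b → besselJr ν x ≠ 0) :
    (∀ x, a < x → x < b → 0 < besselJr ν x) ∨ (∀ x, a < x → x < b → besselJr ν x < 0) := by
  set m := (a+b)/2 with hm
  have hm1 : a < m := by rw [hm]; linarith
  have hm2 : m < b := by rw [hm]; linarith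
  rcases (hnz m hm1 hm2).lt_or_gt with h | h
  · right
    intro x hx1 hx2
    by_contra hcon
    push_neg at hcon
    have hxpos : (0:ℝ) < besselJr ν x := lt_of_le_of_ne hcon (Ne.symm (hnz x hx1 hx2))
    rcases le_total x m with hxm | hxm
    · have : 0 < besselJr ν m := by
        exact sign_propagate hxm (besselJr_continuousOn hν (lt_trans h0a hx1))
          (fun t ht => hnz t (lt_of_lt_of_le hx1 ht.1) (lt_of_le_of_lt ht.2 hm2)) hxpos
      linarith
    · have : 0 < -besselJr ν x := by
        apply sign_propagate hxm (f := fun t => -besselJr ν t)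
          ((besselJr_continuousOn hν (lt_trans h0a hm1)).neg) ?_ (show 0 < -besselJr ν m by linarith)
        intro t ht
        simp only [ne_eq, neg_eq_zero]
        exact hnz t (lt_of_lt_of_le hm1 ht.1) (lt_of_le_of_lt ht.2 hx2)
      linarith
  · left
    intro x hx1 hx2
    rcases le_total m x with hxm | hxm
    · apply sign_propagate hxm (besselJr_continuousOn hν (lt_trans h0a hm1)) ?_ h
      intro t ht
      exact hnz t (lt_of_lt_of_le hm1 ht.1) (lt_of_le_of_lt ht.2 hx2)
    · have : 0 < - -besselJr ν x := by
        rw [neg_neg]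
        by_contra hcon
        push_neg at hcon
        have hxneg : besselJr ν x < 0 := lt_of_le_of_ne hcon (hnz x hx1 hx2)
        have : 0 < -besselJr ν m := by
          apply sign_propagate hxm (f := fun t => -besselJr ν t)
            ((besselJr_continuousOn hν (lt_trans h0a hx1)).neg) ?_ (show 0 < -besselJr ν x by linarith)
          intro t ht
          simp only [ne_eq, neg_eq_zero]
          exact hnz t (lt_of_lt_of_le hx1 ht.1) (lt_of_le_of_lt ht.2 hm2)
        have h2 : 0 < -besselJr ν m := this
        linarith
      linarith [this]
lemma rpow_pos' {x p : ℝ} (hx : 0 < x) : 0 < x ^ p := Real.rpow_pos_of_pos hx p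

/-- core alternation argument: `J_ν` cannot have the same sign on two adjacent
intervals between consecutive zeros -/
lemma alternation_core (hν : -1 < ν) {σ a b c : ℝ} (hσ : σ = 1 ∨ σ = -1)
    (h0a : 0 < a) (hab : a < b) (hbc : b < c)
    (hJb : besselJr ν b = 0) (hJc : besselJr ν c = 0)
    (hL : ∀ x, a < x → x < b → 0 < σ * besselJr ν x)
    (hR : ∀ x, b < x → x < c → 0 < σ * besselJr ν x) : False := by
  have hσne : σ ≠ 0 := by rcases hσ with h | h <;> rw [h] <;> norm_num
  have hb0 : 0 < b := lt_trans h0a hab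
  set u : ℝ → ℝ := fun y => σ * (y ^ (-ν) * besselJr ν y) with hu
  set v : ℝ → ℝ := fun y => σ * (y ^ (ν+1) * besselJr (ν+1) y) with hv
  have hud : ∀ {x : ℝ}, 0 < x → HasDerivAt u (σ * -(x ^ (-ν) * besselJr (ν+1) x)) x :=
    fun hx => (hasDerivAt_uJ hν hx).const_mul σ
  have hvd : ∀ {x : ℝ}, 0 < x → HasDerivAt v (σ * (x ^ (ν+1) * besselJr ν x)) x :=
    fun hx => (hasDerivAt_vJ hν hx).const_mul σ
  have hub : u b = 0 := by rw [hu]; simp [hJb]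
  have huc : u c = 0 := by rw [hu]; simp [hJc]
  have hupos : ∀ x, b < x → x < c → 0 < u x := by
    intro x h1 h2
    have : u x = x ^ (-ν) * (σ * besselJr ν x) := by rw [hu]; ring
    rw [this]
    exact mul_pos (rpow_pos' (lt_trans hb0 h1)) (hR x h1 h2)
  -- local minimum of u at b
  have hmin : IsLocalMin u b := by
    have hmem : Ioo a c ∈ 𝓝 b := Ioo_mem_nhds hab hbc
    filter_upwards [hmem] with y hy
    rcases lt_trichotomy y b with h | h | h
    · have : u y = y ^ (-ν) * (σ * besselJr ν y) := by rw [hu]; ring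
      rw [hub, this]
      exact le_of_lt (mul_pos (rpow_pos' (lt_trans h0a hy.1)) (hL y hy.1 h))
    · rw [h, hub]
    · rw [hub]
      exact le_of_lt (hupos y h hy.2)
  have hderiv0 : σ * -(b ^ (-ν) * besselJr (ν+1) b) = 0 := by
    have h1 := (hud hb0).deriv
    have h2 := hmin.deriv_eq_zero
    rw [← h1, h2]
  have hJ1b : besselJr (ν+1) b = 0 := by
    have hbν : b ^ (-ν) ≠ 0 := ne_of_gt (rpow_pos' hb0)
    rw [mul_neg, neg_eq_zero] at hderiv0
    rcases mul_eq_zero.mp hderiv0 with h | h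
    · exact absurd h hσne
    · rcases mul_eq_zero.mp h with h2 | h2
      · exact absurd h2 hbν
      · exact h2
  have hvb : v b = 0 := by rw [hv]; simp [hJ1b]
  -- v is monotone on [b,c]
  have hvmono : MonotoneOn v (Icc b c) := by
    apply monotoneOn_of_deriv_nonneg (convex_Icc b c)
    · intro t ht
      exact ((hvd (lt_of_lt_of_le hb0 ht.1)).continuousAt).continuousWithinAt
    · intro t ht
      rw [interior_Icc] at ht
      exact ((hvd (lt_trans hb0 ht.1)).differentiableAt).differentiableWithinAt
    · intro t ht
      rw [interior_Icc] at ht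
      rw [(hvd (lt_trans hb0 ht.1)).deriv]
      have : σ * (t ^ (ν+1) * besselJr ν t) = t ^ (ν+1) * (σ * besselJr ν t) := by ring
      rw [this]
      exact le_of_lt (mul_pos (rpow_pos' (lt_trans hb0 ht.1)) (hR t ht.1 ht.2))
  have hvnn : ∀ t ∈ Icc b c, 0 ≤ v t := by
    intro t ht
    rw [← hvb]
    exact hvmono (left_mem_Icc.mpr (le_of_lt hbc)) ht ht.1
  -- u is antitone on [b,c]
  have huanti : AntitoneOn u (Icc b c) := by
    apply antitoneOn_of_deriv_nonpos (convex_Icc b c)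
    · intro t ht
      exact ((hud (lt_of_lt_of_le hb0 ht.1)).continuousAt).continuousWithinAt
    · intro t ht
      rw [interior_Icc] at ht
      exact ((hud (lt_trans hb0 ht.1)).differentiableAt).differentiableWithinAt
    · intro t ht
      rw [interior_Icc] at ht
      have ht0 : 0 < t := lt_trans hb0 ht.1
      rw [(hud ht0).deriv]
      have hvt : 0 ≤ v t := hvnn t ⟨le_of_lt ht.1, le_of_lt ht.2⟩
      have hvt' : 0 ≤ t ^ (ν+1) * (σ * besselJr (ν+1) t) := by
        have : v t = t ^ (ν+1) * (σ * besselJr (ν+1) t) := by rw [hv]; ring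
        linarith [this ▸ hvt]
      have hσJ1 : 0 ≤ σ * besselJr (ν+1) t := nonneg_of_mul_nonneg_right hvt' (rpow_pos' ht0)
      have : σ * -(t ^ (-ν) * besselJr (ν+1) t) = -(t ^ (-ν) * (σ * besselJr (ν+1) t)) := by ring
      rw [this]
      have := mul_nonneg (le_of_lt (rpow_pos' (p := -ν) ht0)) hσJ1
      linarith
  -- contradiction at the midpoint
  have hm1 : b < (b+c)/2 := by linarith
  have hm2 : (b+c)/2 < c := by linarith
  have h1 : u ((b+c)/2) ≤ u b :=
    huanti (left_mem_Icc.mpr (le_of_lt hbc)) ⟨le_of_lt hm1, le_of_lt hm2⟩ (le_of_lt hm1)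
  have h2 := hupos _ hm1 hm2
  rw [hub] at h1
  linarith

lemma sign_pattern (hν : -1 < ν) (z : ℕ → ℝ) (hmono : StrictMono z)
    (hzero : ∀ n, 0 < z n ∧ besselJr ν (z n) = 0)
    (hall : ∀ x : ℝ, 0 < x → besselJr ν x = 0 → ∃ n, x = z n) :
    (∀ x, 0 < x → x < z 0 → 0 < besselJr ν x) ∧
    (∀ n, ∀ x, z n < x → x < z (n+1) → 0 < (-1:ℝ)^(n+1) * besselJr ν x) := by
  have hnz0 : ∀ x, 0 < x → x < z 0 → besselJr ν x ≠ 0 := by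
    intro x hx hxz hJ
    obtain ⟨n, rfl⟩ := hall x hx hJ
    exact absurd (hmono.monotone (Nat.zero_le n)) (not_le.mpr hxz)
  have part1 : ∀ x, 0 < x → x < z 0 → 0 < besselJr ν x := by
    obtain ⟨δ, hδ, hnear⟩ := besselJr_pos_near_zero hν
    intro x hx hxz
    set y := min (δ/2) x with hy
    have hy0 : 0 < y := lt_min (by linarith) hx
    have hyx : y ≤ x := min_le_right _ _
    have hyδ : y < δ := lt_of_le_of_lt (min_le_left _ _) (by linarith)
    exact sign_propagate hyx (besselJr_continuousOn hν hy0)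
      (fun t ht => hnz0 t (lt_of_lt_of_le hy0 ht.1) (lt_of_le_of_lt ht.2 hxz))
      (hnear y hy0 hyδ)
  refine ⟨part1, ?_⟩
  have hnzI : ∀ n, ∀ x, z n < x → x < z (n+1) → besselJr ν x ≠ 0 := by
    intro n x h1 h2 hJ
    have hx0 : 0 < x := lt_trans (hzero n).1 h1
    obtain ⟨m, rfl⟩ := hall x hx0 hJ
    have hnm : n < m := hmono.lt_iff_lt.mp h1
    have hmn : m < n+1 := hmono.lt_iff_lt.mp h2
    omega
  intro n
  induction n with
  | zero =>
    rcases dichotomy hν (hzero 0).1 (hmono Nat.zero_lt_one) (hnzI 0) with hpos | hneg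
    · exfalso
      apply alternation_core hν (σ := 1) (Or.inl rfl) (a := z 0 / 2) (b := z 0) (c := z 1)
        (by linarith [(hzero 0).1]) (by linarith [(hzero 0).1]) (hmono Nat.zero_lt_one)
        (hzero 0).2 (hzero 1).2
      · intro x h1 h2
        rw [one_mul]
        exact part1 x (by linarith [(hzero 0).1]) h2
      · intro x h1 h2
        rw [one_mul]
        exact hpos x h1 h2
    · intro x h1 h2
      have := hneg x h1 h2
      rw [pow_one]
      linarith
  | succ n ihn =>
    have hpow : ((-1:ℝ))^(n+1+1) = -((-1:ℝ))^(n+1) := by rw [pow_succ]; ring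
    have hσ : ((-1:ℝ))^(n+1) = 1 ∨ ((-1:ℝ))^(n+1) = -1 := by
      rcases Nat.even_or_odd (n+1) with he | ho
      · exact Or.inl he.neg_one_pow
      · exact Or.inr ho.neg_one_pow
    rcases dichotomy hν (hzero (n+1)).1 (hmono (Nat.lt_succ_self (n+1))) (hnzI (n+1)) with hpos | hneg
    · rcases hσ with h1 | h1
      · exfalso
        apply alternation_core hν (σ := 1) (Or.inl rfl) (hzero n).1
          (hmono (Nat.lt_succ_self n)) (hmono (Nat.lt_succ_self (n+1)))
          (hzero (n+1)).2 (hzero (n+2)).2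
        · intro x hx1 hx2
          have := ihn x hx1 hx2
          rw [h1] at this
          exact this
        · intro x hx1 hx2
          rw [one_mul]
          exact hpos x hx1 hx2
      · intro x hx1 hx2
        rw [hpow, h1, neg_neg, one_mul]
        exact hpos x hx1 hx2
    · rcases hσ with h1 | h1
      · intro x hx1 hx2
        rw [hpow, h1]
        have := hneg x hx1 hx2
        linarith
      · exfalso
        apply alternation_core hν (σ := -1) (Or.inr rfl) (hzero n).1
          (hmono (Nat.lt_succ_self n)) (hmono (Nat.lt_succ_self (n+1)))
          (hzero (n+1)).2 (hzero (n+2)).2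
        · intro x hx1 hx2
          have := ihn x hx1 hx2
          rw [h1] at this
          exact this
        · intro x hx1 hx2
          have := hneg x hx1 hx2
          have hg : (-1:ℝ) * besselJr ν x = -besselJr ν x := by ring
          rw [hg]
          linarith

lemma zeros_unbounded (hν : -1 < ν) (z : ℕ → ℝ) (hmono : StrictMono z)
    (hzero : ∀ n, 0 < z n ∧ besselJr ν (z n) = 0)
    (hall : ∀ x : ℝ, 0 < x → besselJr ν x = 0 → ∃ n, x = z n) :
    ∀ B : ℝ, ∃ n, B < z n := by
  by_contra h
  push_neg at h
  obtain ⟨B, hB⟩ := h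
  have hbdd : BddAbove (range z) := ⟨B, by rintro _ ⟨n, rfl⟩; exact hB n⟩
  set L := ⨆ n, z n with hL
  have htend : Tendsto z atTop (𝓝 L) := tendsto_atTop_ciSup hmono.monotone hbdd
  have hle : ∀ n, z n ≤ L := fun n => le_ciSup hbdd n
  have hL0 : 0 < L := lt_of_lt_of_le (hzero 0).1 (hle 0)
  have hJL : besselJr ν L = 0 := by
    have h1 : Tendsto (fun n => besselJr ν (z n)) atTop (𝓝 (besselJr ν L)) :=
      ((besselJr_continuousAt hν hL0).tendsto).comp htend
    have h2 : (fun n => besselJr ν (z n)) = fun _ => (0:ℝ) := funext fun n => (hzero n).2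
    rw [h2] at h1
    exact (tendsto_nhds_unique h1 tendsto_const_nhds)
  obtain ⟨m, hm⟩ := hall L hL0 hJL
  have h3 : z m < z (m+1) := hmono (Nat.lt_succ_self m)
  have h4 := hle (m+1)
  rw [← hm] at h3
  linarith

lemma zero_of_J1_between (hν : -1 < ν) {a b : ℝ} (h0 : 0 < a) (hab : a < b)
    (hJa : besselJr ν a = 0) (hJb : besselJr ν b = 0) :
    ∃ c, a < c ∧ c < b ∧ besselJr (ν+1) c = 0 := by
  have hcont : ContinuousOn (fun y => y^(-ν) * besselJr ν y) (Icc a b) := fun t ht =>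
    ((hasDerivAt_uJ hν (lt_of_lt_of_le h0 ht.1)).continuousAt).continuousWithinAt
  have heq : a^(-ν) * besselJr ν a = b^(-ν) * besselJr ν b := by rw [hJa, hJb, mul_zero, mul_zero]
  obtain ⟨c, hc, hc0⟩ := exists_hasDerivAt_eq_zero hab hcont heq
    (fun x hx => hasDerivAt_uJ hν (lt_trans h0 hx.1))
  refine ⟨c, hc.1, hc.2, ?_⟩
  have hcν : c ^ (-ν) ≠ 0 := ne_of_gt (rpow_pos' (lt_trans h0 hc.1))
  rw [neg_eq_zero] at hc0
  rcases mul_eq_zero.mp hc0 with h | h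
  · exact absurd h hcν
  · exact h

lemma zero_of_J_between (hν : -1 < ν) {a b : ℝ} (h0 : 0 < a) (hab : a < b)
    (hJa : besselJr (ν+1) a = 0) (hJb : besselJr (ν+1) b = 0) :
    ∃ c, a < c ∧ c < b ∧ besselJr ν c = 0 := by
  have hcont : ContinuousOn (fun y => y^(ν+1) * besselJr (ν+1) y) (Icc a b) := fun t ht =>
    ((hasDerivAt_vJ hν (lt_of_lt_of_le h0 ht.1)).continuousAt).continuousWithinAt
  have heq : a^(ν+1) * besselJr (ν+1) a = b^(ν+1) * besselJr (ν+1) b := by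
    rw [hJa, hJb, mul_zero, mul_zero]
  obtain ⟨c, hc, hc0⟩ := exists_hasDerivAt_eq_zero hab hcont heq
    (fun x hx => hasDerivAt_vJ hν (lt_trans h0 hx.1))
  refine ⟨c, hc.1, hc.2, ?_⟩
  have hcν : c ^ (ν+1) ≠ 0 := ne_of_gt (rpow_pos' (lt_trans h0 hc.1))
  rcases mul_eq_zero.mp hc0 with h | h
  · exact absurd h hcν
  · exact h

lemma zero_of_J_first (hν : -1 < ν) {b : ℝ} (hb : 0 < b) (hJb : besselJr (ν+1) b = 0) :
    ∃ c, 0 < c ∧ c < b ∧ besselJr ν c = 0 := by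
  have htb : Tendsto (fun y => y^(ν+1) * besselJr (ν+1) y) (𝓝[<] b) (𝓝 0) := by
    have h1 : Tendsto (fun y => y^(ν+1) * besselJr (ν+1) y) (𝓝 b)
        (𝓝 (b^(ν+1) * besselJr (ν+1) b)) := ((hasDerivAt_vJ hν hb).continuousAt)
    rw [hJb, mul_zero] at h1
    exact h1.mono_left nhdsWithin_le_nhds
  obtain ⟨c, hc, hc0⟩ := exists_hasDerivAt_eq_zero' hb (tendsto_vJ_zero hν) htb
    (fun x hx => hasDerivAt_vJ hν hx.1)
  refine ⟨c, hc.1, hc.2, ?_⟩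
  have hcν : c ^ (ν+1) ≠ 0 := ne_of_gt (rpow_pos' hc.1)
  rcases mul_eq_zero.mp hc0 with h | h
  · exact absurd h hcν
  · exact h


end BAux

open BAux

/-- For `ν > -1`, `Φ_ν` has an increasing sequence `γ` of positive zeros exhausting all of its
positive zeros, interlacing with the positive zeros `j` of `J_ν` and `j'` of `J_{ν+1}`:
`j_n < γ_n < j_{n+1}` and `γ_n < j'_n`. -/
theorem stmt14 (ν : ℝ) (hν : -1 < ν)
    (j : ℕ → ℝ) (hjmono : StrictMono j)
    (hjzero : ∀ n, 0 < j n ∧ besselJr ν (j n) = 0)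
    (hjall : ∀ x : ℝ, 0 < x → besselJr ν x = 0 → ∃ n, x = j n)
    (j' : ℕ → ℝ) (hj'mono : StrictMono j')
    (hj'zero : ∀ n, 0 < j' n ∧ besselJr (ν + 1) (j' n) = 0)
    (hj'all : ∀ x : ℝ, 0 < x → besselJr (ν + 1) x = 0 → ∃ n, x = j' n) :
    ∃ γ : ℕ → ℝ, StrictMono γ ∧ (∀ n, 0 < γ n ∧ crossProd ν (γ n) = 0) ∧
      (∀ x : ℝ, 0 < x → crossProd ν x = 0 → ∃ n, x = γ n) ∧
      ∀ n, j n < γ n ∧ γ n < j (n + 1) ∧ γ n < j' n := by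
  classical
  have hν1 : -1 < ν + 1 := by linarith
  obtain ⟨SJ0, SJ⟩ := sign_pattern hν j hjmono hjzero hjall
  obtain ⟨SJ'0, SJ'⟩ := sign_pattern hν1 j' hj'mono hj'zero hj'all
  -- interlacing
  have interlace : ∀ n, j n < j' n ∧ j' n < j (n+1) := by
    intro n
    induction n with
    | zero =>
      constructor
      · obtain ⟨c, hc1, hc2, hc3⟩ := zero_of_J_first hν (hj'zero 0).1 (hj'zero 0).2
        obtain ⟨m, rfl⟩ := hjall c hc1 hc3
        exact lt_of_le_of_lt (hjmono.monotone (Nat.zero_le m)) hc2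
      · obtain ⟨c, hc1, hc2, hc3⟩ := zero_of_J1_between hν (hjzero 0).1
          (hjmono Nat.zero_lt_one) (hjzero 0).2 (hjzero 1).2
        obtain ⟨m, rfl⟩ := hj'all c (lt_trans (hjzero 0).1 hc1) hc3
        exact lt_of_le_of_lt (hj'mono.monotone (Nat.zero_le m)) hc2
    | succ n ih =>
      obtain ⟨h1, h2⟩ := ih
      constructor
      · obtain ⟨c, hc1, hc2, hc3⟩ := zero_of_J_between hν (hj'zero n).1
          (hj'mono (Nat.lt_succ_self n)) (hj'zero n).2 (hj'zero (n+1)).2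
        obtain ⟨k, rfl⟩ := hjall c (lt_trans (hj'zero n).1 hc1) hc3
        have hnk : n < k := hjmono.lt_iff_lt.mp (lt_trans h1 hc1)
        exact lt_of_le_of_lt (hjmono.monotone hnk) hc2
      · obtain ⟨c, hc1, hc2, hc3⟩ := zero_of_J1_between hν (hjzero (n+1)).1
          (hjmono (Nat.lt_succ_self (n+1))) (hjzero (n+1)).2 (hjzero (n+2)).2
        obtain ⟨m, rfl⟩ := hj'all c (lt_trans (hjzero (n+1)).1 hc1) hc3
        have hnm : n < m := hj'mono.lt_iff_lt.mp (lt_trans h2 hc1)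
        exact lt_of_le_of_lt (hj'mono.monotone hnm) hc2
  -- sign of Φ at the zeros of J
  have hΦj : ∀ n, 0 < (-1:ℝ)^n * crossProd ν (j n) := by
    intro n
    have hΦeq : crossProd ν (j n) = besselJr (ν+1) (j n) * besselIr ν (j n) := by
      rw [crossProd, (hjzero n).2, zero_mul, add_zero]
    rw [hΦeq]
    have hI := besselIr_pos hν (hjzero n).1
    match n with
    | 0 =>
      have hJ1 : 0 < besselJr (ν+1) (j 0) := SJ'0 (j 0) (hjzero 0).1 (interlace 0).1
      rw [pow_zero, one_mul]
      exact mul_pos hJ1 hI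
    | Nat.succ m =>
      have hJ1 : 0 < (-1:ℝ)^(m+1) * besselJr (ν+1) (j (m+1)) :=
        SJ' m (j (m+1)) (interlace m).2 (interlace (m+1)).1
      calc (0:ℝ) < ((-1:ℝ)^(m+1) * besselJr (ν+1) (j (m+1))) * besselIr ν (j (m+1)) :=
            mul_pos hJ1 hI
        _ = (-1:ℝ)^(m+1) * (besselJr (ν+1) (j (m+1)) * besselIr ν (j (m+1))) := by ring
  -- sign of Φ at the zeros of J'
  have hΦj' : ∀ n, 0 < (-1:ℝ)^(n+1) * crossProd ν (j' n) := by
    intro n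
    have hΦeq : crossProd ν (j' n) = besselJr ν (j' n) * besselIr (ν+1) (j' n) := by
      rw [crossProd, (hj'zero n).2, zero_mul, zero_add]
    rw [hΦeq]
    have hI := besselIr_pos hν1 (hj'zero n).1
    have hJ : 0 < (-1:ℝ)^(n+1) * besselJr ν (j' n) :=
      SJ n (j' n) (interlace n).1 (interlace n).2
    calc (0:ℝ) < ((-1:ℝ)^(n+1) * besselJr ν (j' n)) * besselIr (ν+1) (j' n) := mul_pos hJ hI
      _ = (-1:ℝ)^(n+1) * (besselJr ν (j' n) * besselIr (ν+1) (j' n)) := by ring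
  -- Φ is positive on (0, j 0]
  have hΦ0 : ∀ x, 0 < x → x ≤ j 0 → 0 < crossProd ν x := by
    intro x hx hxj
    rcases eq_or_lt_of_le hxj with rfl | hlt
    · have := hΦj 0
      rwa [pow_zero, one_mul] at this
    · have hJ := SJ0 x hx hlt
      have hJ1 := SJ'0 x hx (lt_trans hlt (interlace 0).1)
      have hI := besselIr_pos hν hx
      have hI1 := besselIr_pos hν1 hx
      rw [crossProd]
      positivity
  -- Φ is sign-definite on [j' n, j (n+1)]
  have hΦmid : ∀ n x, j' n ≤ x → x ≤ j (n+1) → 0 < (-1:ℝ)^(n+1) * crossProd ν x := by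
    intro n x h1 h2
    rcases eq_or_lt_of_le h1 with rfl | h1'
    · exact hΦj' n
    rcases eq_or_lt_of_le h2 with rfl | h2'
    · exact hΦj (n+1)
    have hx0 : 0 < x := lt_trans (hj'zero n).1 h1'
    have hJ : 0 < (-1:ℝ)^(n+1) * besselJr ν x := SJ n x (lt_trans (interlace n).1 h1') h2'
    have hJ1 : 0 < (-1:ℝ)^(n+1) * besselJr (ν+1) x :=
      SJ' n x h1' (lt_trans h2' (interlace (n+1)).1)
    have hI := besselIr_pos hν hx0
    have hI1 := besselIr_pos hν1 hx0
    have hexp : (-1:ℝ)^(n+1) * crossProd ν x =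
        ((-1:ℝ)^(n+1) * besselJr (ν+1) x) * besselIr ν x +
        ((-1:ℝ)^(n+1) * besselJr ν x) * besselIr (ν+1) x := by
      rw [crossProd]; ring
    rw [hexp]
    positivity
  -- localization of the zeros of Φ
  have hloc : ∀ x, 0 < x → crossProd ν x = 0 → ∃ n, j n < x ∧ x < j' n := by
    intro x hx hΦ
    have hx0 : ¬ x ≤ j 0 := by
      intro h
      have := hΦ0 x hx h
      rw [hΦ] at this
      exact lt_irrefl 0 this
    obtain ⟨N, hN⟩ := zeros_unbounded hν j hjmono hjzero hjall x
    have hex : ∃ k, x ≤ j k := ⟨N, hN.le⟩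
    set K := Nat.find hex with hK
    have hKspec : x ≤ j K := Nat.find_spec hex
    have hKne : K ≠ 0 := by
      intro h
      rw [h] at hKspec
      exact hx0 hKspec
    obtain ⟨m, hm⟩ : ∃ m, K = m + 1 := ⟨K - 1, by omega⟩
    have hmlt : j m < x := by
      have := Nat.find_min hex (m := m) (by omega)
      push_neg at this
      exact this
    rw [hm] at hKspec
    refine ⟨m, hmlt, ?_⟩
    by_contra hcon
    push_neg at hcon
    have := hΦmid m x hcon hKspec
    rw [hΦ, mul_zero] at this
    exact lt_irrefl 0 this
  -- continuity of Φ
  have hΦca : ∀ {x : ℝ}, 0 < x → ContinuousAt (crossProd ν) x := by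
    intro x hx
    have : ContinuousAt (fun y => besselJr (ν+1) y * besselIr ν y
        + besselJr ν y * besselIr (ν+1) y) x :=
      ((besselJr_continuousAt hν1 hx).mul (besselIr_continuousAt hν hx)).add
        ((besselJr_continuousAt hν hx).mul (besselIr_continuousAt hν1 hx))
    exact this
  -- existence of a zero of Φ in each (j n, j' n)
  have hexist : ∀ n, ∃ c, j n < c ∧ c < j' n ∧ crossProd ν c = 0 := by
    intro n
    set g := fun x => (-1:ℝ)^(n+1) * crossProd ν x with hg
    have hga : g (j n) < 0 := by
      have := hΦj n
      have hps : ((-1:ℝ))^(n+1) = -((-1:ℝ))^n := by rw [pow_succ]; ring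
      rw [hg]
      simp only
      rw [hps]
      nlinarith
    have hgb : 0 < g (j' n) := hΦj' n
    have hcont : ContinuousOn g (Icc (j n) (j' n)) := by
      intro t ht
      have ht0 : 0 < t := lt_of_lt_of_le (hjzero n).1 ht.1
      exact (ContinuousAt.mul continuousAt_const (hΦca ht0)).continuousWithinAt
    have hmem : (0:ℝ) ∈ Ioo (g (j n)) (g (j' n)) := ⟨hga, hgb⟩
    obtain ⟨c, hc, hgc⟩ := intermediate_value_Ioo (le_of_lt (interlace n).1) hcont hmem
    refine ⟨c, hc.1, hc.2, ?_⟩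
    have hne : ((-1:ℝ))^(n+1) ≠ 0 := by
      apply pow_ne_zero
      norm_num
    rcases mul_eq_zero.mp hgc with h | h
    · exact absurd h hne
    · exact h
  -- uniqueness of the zero of Φ in each (j n, j' n)
  have haux : ∀ n a b, j n < a → b < j' n → a < b →
      crossProd ν a = 0 → crossProd ν b = 0 → False := by
    intro n a b hja hbj hab hΦa hΦb
    have ha0 : 0 < a := lt_trans (hjzero n).1 hja
    have hcont : ContinuousOn (fun y => y * crossProd ν y) (Icc a b) := fun t ht =>
      ((hasDerivAt_xcross hν (lt_of_lt_of_le ha0 ht.1)).continuousAt).continuousWithinAt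
    have heq : a * crossProd ν a = b * crossProd ν b := by rw [hΦa, hΦb, mul_zero, mul_zero]
    obtain ⟨c, hc, hc0⟩ := exists_hasDerivAt_eq_zero hab hcont heq
      (fun x hx => hasDerivAt_xcross hν (lt_trans ha0 hx.1))
    have hc0' : 0 < c := lt_trans ha0 hc.1
    have hI := besselIr_pos hν hc0'
    have hJc : besselJr ν c = 0 := by
      rcases mul_eq_zero.mp hc0 with h | h
      · rcases mul_eq_zero.mp h with h2 | h2
        · rcases mul_eq_zero.mp h2 with h3 | h3
          · norm_num at h3
          · linarith
        · exact h2
      · linarith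
    obtain ⟨k, rfl⟩ := hjall c hc0' hJc
    have hnk : n < k := hjmono.lt_iff_lt.mp (lt_trans hja hc.1)
    have : j (n+1) ≤ j k := hjmono.monotone hnk
    have : j k < j (n+1) := by
      calc j k < b := hc.2
        _ < j' n := hbj
        _ < j (n+1) := (interlace n).2
    linarith
  have huniq : ∀ n a b, j n < a → a < j' n → j n < b → b < j' n →
      crossProd ν a = 0 → crossProd ν b = 0 → a = b := by
    intro n a b ha1 ha2 hb1 hb2 hΦa hΦb
    rcases lt_trichotomy a b with h | h | h
    · exact absurd (haux n a b ha1 hb2 h hΦa hΦb) not_false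
    · exact h
    · exact absurd (haux n b a hb1 ha2 h hΦb hΦa) not_false
  choose γ hγ1 hγ2 hγ3 using hexist
  refine ⟨γ, ?_, ?_, ?_, ?_⟩
  · apply strictMono_nat_of_lt_succ
    intro n
    calc γ n < j' n := hγ2 n
      _ < j (n+1) := (interlace n).2
      _ < γ (n+1) := hγ1 (n+1)
  · intro n
    exact ⟨lt_trans (hjzero n).1 (hγ1 n), hγ3 n⟩
  · intro x hx hΦ
    obtain ⟨n, hn1, hn2⟩ := hloc x hx hΦ
    exact ⟨n, huniq n x (γ n) hn1 hn2 (hγ1 n) (hγ2 n) hΦ (hγ3 n)⟩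
  · intro n
    exact ⟨hγ1 n, lt_trans (hγ2 n) (interlace n).2, hγ2 n⟩
end
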